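/- arXiv:0804.1243 — 6 statements merged into one kernel-verified Lean document; each statement's English description precedes it below -/
import Mathlib

section
/- Let A ∈ SU(H) be such that its characteristic polynomial over L equals its minimal polynomial. Suppose A = A_1 A_2 with A_1, A_2 ∈ GL(n, L) satisfying Ā_1 A_1 = I = Ā_2 A_2. Then A_1 and A_2 belong to U(H). -/
open Matrix Polynomial

open UniqueFactorizationMonoid in
/-- Existence of a cyclic vector for a matrix `A` whose annihilator ideal is generated by
its characteristic polynomial. -/
theorem exists_cyclic_vec {L : Type*} [Field L] {n : ℕ}
    (A : Matrix (Fin n) (Fin n) L)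
    (hdvd : ∀ f : L[X], aeval A f = 0 → A.charpoly ∣ f) :
    ∃ v : Fin n → L, ∀ f : L[X], (aeval A f) *ᵥ v = 0 → A.charpoly ∣ f := by
  classical
  have hmonic : (A.charpoly).Monic := A.charpoly_monic
  have hm0 : A.charpoly ≠ 0 := hmonic.ne_zero
  set m := A.charpoly with hm
  have hz : aeval A m = 0 := by rw [hm]; exact A.aeval_self_charpoly
  obtain ⟨u, hu⟩ := (prod_normalizedFactors hm0)
  set S : Finset L[X] := (normalizedFactors m).toFinset with hS
  set c : L[X] → ℕ := fun p => (normalizedFactors m).count p with hc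
  have hprod : (∏ p ∈ S, p ^ c p) * (u : L[X]) = m := by
    rw [hS, hc, ← Finset.prod_multiset_count]
    exact hu
  set r : L[X] → L[X] := fun p => (∏ q ∈ S.erase p, q ^ c q) * (u : L[X]) with hr
  have hmr : ∀ p ∈ S, p ^ c p * r p = m := by
    intro p hp
    rw [hr]
    dsimp only
    rw [← mul_assoc, Finset.mul_prod_erase S (fun q => q ^ c q) hp, hprod]
  have hprime : ∀ p ∈ S, Prime p := fun p hp =>
    prime_of_normalized_factor p (Multiset.mem_toFinset.mp hp)
  have hcpos : ∀ p ∈ S, 0 < c p := fun p hp =>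
    Multiset.count_pos.mpr (Multiset.mem_toFinset.mp hp)
  have hpne : ∀ p ∈ S, p ≠ 0 := fun p hp => (hprime p hp).ne_zero
  have hrne : ∀ p ∈ S, r p ≠ 0 := by
    intro p hp h0
    exact hm0 (by rw [← hmr p hp, h0, mul_zero])
  have hp_ne_dvd : ∀ p ∈ S, ∀ q ∈ S, p ≠ q → ¬ p ∣ q := by
    intro p hp q hq hne hd
    have hassoc := (hprime p hp).irreducible.associated_of_dvd (hprime q hq).irreducible hd
    exact hne (dvd_antisymm_of_normalize_eq
      (normalize_normalized_factor p (Multiset.mem_toFinset.mp hp))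
      (normalize_normalized_factor q (Multiset.mem_toFinset.mp hq))
      hassoc.dvd hassoc.symm.dvd)
  have hndvd : ∀ p ∈ S, ¬ p ∣ r p := by
    intro p hp hd
    have h1 : p ∣ ∏ q ∈ S.erase p, q ^ c q := (Units.dvd_mul_right).mp hd
    obtain ⟨q, hq, hpq⟩ := (Prime.dvd_finset_prod_iff (hprime p hp) _).mp h1
    have hqS := Finset.mem_of_mem_erase hq
    exact hp_ne_dvd p hp q hqS (Ne.symm (Finset.ne_of_mem_erase hq))
      ((hprime p hp).dvd_of_dvd_pow hpq)
  have hdegp : ∀ p ∈ S, 0 < p.natDegree := fun p hp => (hprime p hp).irreducible.natDegree_pos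
  have hqne : ∀ p ∈ S, aeval A (p ^ (c p - 1) * r p) ≠ 0 := by
    intro p hp h0
    have hdd := hdvd _ h0
    have hne : p ^ (c p - 1) * r p ≠ 0 :=
      mul_ne_zero (pow_ne_zero _ (hpne p hp)) (hrne p hp)
    have hle := Polynomial.natDegree_le_of_dvd hdd hne
    have e1 : m.natDegree = (c p) * p.natDegree + (r p).natDegree := by
      rw [← hmr p hp, Polynomial.natDegree_mul (pow_ne_zero _ (hpne p hp)) (hrne p hp),
        Polynomial.natDegree_pow]
    have e2 : (p ^ (c p - 1) * r p).natDegree = (c p - 1) * p.natDegree + (r p).natDegree := by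
      rw [Polynomial.natDegree_mul (pow_ne_zero _ (hpne p hp)) (hrne p hp),
        Polynomial.natDegree_pow]
    rw [e1, e2] at hle
    have h3 := hcpos p hp
    have h4 := hdegp p hp
    obtain ⟨c', hc'⟩ : ∃ c', c p = c' + 1 := ⟨c p - 1, (Nat.succ_pred_eq_of_pos h3).symm⟩
    rw [hc'] at hle
    simp only [Nat.add_sub_cancel, add_mul, one_mul] at hle
    omega
  have hex : ∀ p ∈ S, ∃ w : Fin n → L, (aeval A (p ^ (c p - 1) * r p)) *ᵥ w ≠ 0 := by
    intro p hp
    by_contra hcon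
    push_neg at hcon
    apply hqne p hp
    ext i j
    have h5 := congrFun (hcon (Pi.single j 1)) i
    simpa using h5
  choose! W hW using hex
  set v : Fin n → L := ∑ p ∈ S, (aeval A (r p)) *ᵥ W p with hv
  have sum_mulVec : ∀ (P : Matrix (Fin n) (Fin n) L),
      P *ᵥ v = ∑ p ∈ S, (P * aeval A (r p)) *ᵥ W p := by
    intro P
    rw [hv]
    have h9 := map_sum (Matrix.mulVecLin P) (fun p => (aeval A (r p)) *ᵥ W p) S
    simp only [Matrix.mulVecLin_apply, Matrix.mulVec_mulVec] at h9
    exact h9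
  refine ⟨v, ?_⟩
  intro f hf
  by_cases hf0 : f = 0
  · exact hf0 ▸ dvd_zero m
  suffices hall : ∀ p ∈ S, p ^ c p ∣ f by
    have hcop : (S : Set L[X]).Pairwise (Function.onFun IsCoprime fun p => p ^ c p) := by
      intro p hp q hq hne
      exact (((hprime p (Finset.mem_coe.mp hp)).coprime_iff_not_dvd).mpr
        (hp_ne_dvd p (Finset.mem_coe.mp hp) q (Finset.mem_coe.mp hq) hne)).pow
    have h6 : (∏ p ∈ S, p ^ c p) ∣ f := Finset.prod_dvd_of_coprime hcop hall
    exact hprod ▸ (Units.mul_right_dvd.mpr h6)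
  intro p hpS
  have hcp : IsCoprime (p ^ c p) (r p) :=
    (((hprime p hpS).coprime_iff_not_dvd).mpr (hndvd p hpS)).pow_left
  obtain ⟨a, b, hab⟩ := hcp
  -- Step 1 : applying `aeval A (b * r p)` to `v` isolates the `p` component
  have hstep1 : aeval A (b * r p) *ᵥ v = aeval A (r p) *ᵥ W p := by
    rw [sum_mulVec]
    rw [Finset.sum_eq_single_of_mem p hpS]
    · rw [← _root_.map_mul]
      have hbrr : b * r p * r p = r p - a * m := by
        linear_combination (r p) * hab - a * (hmr p hpS)
      simp only [hbrr, map_sub, _root_.map_mul, hz, mul_zero, sub_zero]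
    · intro q hq hqp
      have h3 : p ^ c p ∣ r q := by
        refine Dvd.dvd.mul_right ?_ _
        exact Finset.dvd_prod_of_mem _ (Finset.mem_erase.mpr ⟨hqp.symm, hpS⟩)
      have hdvd2 : m ∣ b * r p * r q := by
        have : p ^ c p * r p ∣ (r q) * (r p) := mul_dvd_mul h3 dvd_rfl
        rw [hmr p hpS] at this
        calc m ∣ r q * r p := this
          _ ∣ b * r p * r q := ⟨b, by ring⟩
      obtain ⟨s, hs⟩ := hdvd2
      rw [← _root_.map_mul, hs, _root_.map_mul, hz,
        zero_mul, Matrix.zero_mulVec]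
  -- Step 2 : `aeval A (f * r p)` kills `W p`
  have hstep2 : aeval A (f * r p) *ᵥ W p = 0 := by
    have e7 : aeval A (f * r p) *ᵥ W p = aeval A f *ᵥ (aeval A (r p) *ᵥ W p) := by
      rw [Matrix.mulVec_mulVec, ← _root_.map_mul]
    rw [e7, ← hstep1, Matrix.mulVec_mulVec, ← _root_.map_mul, mul_comm f, _root_.map_mul,
      ← Matrix.mulVec_mulVec, hf, Matrix.mulVec_zero]
  -- Step 3 : conclude `p ^ c p ∣ f`
  have hfin : FiniteMultiplicity p f := FiniteMultiplicity.of_prime_left (hprime p hpS) hf0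
  obtain ⟨f', hf', hpf'⟩ := hfin.exists_eq_pow_mul_and_not_dvd
  set j := multiplicity p f with hj
  by_cases hjc : c p ≤ j
  · exact dvd_trans (pow_dvd_pow p hjc) (Dvd.intro f' hf'.symm)
  · push_neg at hjc
    exfalso
    have hcp2 : IsCoprime (p ^ (c p - j)) f' :=
      (((hprime p hpS).coprime_iff_not_dvd).mpr hpf').pow_left
    obtain ⟨a', b', hab'⟩ := hcp2
    set d := c p - j with hd0
    have hd : j + d = c p := Nat.add_sub_cancel' hjc.le
    have hm2 : p ^ j * p ^ d * r p = m := by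
      rw [← pow_add, hd]
      exact hmr p hpS
    have e : p ^ j * r p = a' * m + b' * (f * r p) := by
      linear_combination (-(p ^ j * r p)) * hab' + a' * hm2 - (b' * r p) * hf'
    have hkey : aeval A (p ^ j * r p) *ᵥ W p = 0 := by
      have hstep2' : aeval A f *ᵥ ((aeval A (r p)) *ᵥ W p) = 0 := by
        rw [Matrix.mulVec_mulVec, ← _root_.map_mul]; exact hstep2
      rw [e]
      simp only [map_add, Matrix.add_mulVec, _root_.map_mul, hz, mul_zero,
        Matrix.zero_mulVec, zero_add, ← Matrix.mulVec_mulVec]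
      rw [hstep2', Matrix.mulVec_zero]
    apply hW p hpS
    have e8 : p ^ (c p - 1) * r p = p ^ (c p - 1 - j) * (p ^ j * r p) := by
      have e9 : c p - 1 = (c p - 1 - j) + j := by omega
      conv_lhs => rw [e9, pow_add, mul_assoc]
    rw [e8, _root_.map_mul, ← Matrix.mulVec_mulVec, hkey, Matrix.mulVec_zero]

/-- If `A` is nonderogatory (charpoly = minpoly) and `Aᵀ * G = G * A`, then `G` is
symmetric. -/
theorem transpose_eq_of_intertwine {L : Type*} [Field L] {n : ℕ}
    (A G : Matrix (Fin n) (Fin n) L) (hmin : A.charpoly = minpoly L A)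
    (hG : Aᵀ * G = G * A) : Gᵀ = G := by
  classical
  rcases Nat.eq_zero_or_pos n with hn | hn
  · subst hn; exact Subsingleton.elim _ _
  haveI : Nonempty (Fin n) := Fin.pos_iff_nonempty.mp hn
  have hdvd : ∀ f : L[X], aeval A f = 0 → A.charpoly ∣ f := by
    intro f hf; rw [hmin]; exact minpoly.dvd L A hf
  obtain ⟨v, hv⟩ := exists_cyclic_vec A hdvd
  set b : Fin n → (Fin n → L) := fun i => (A ^ (i : ℕ)) *ᵥ v with hb
  have sum_mulVec : ∀ (g : Fin n → Matrix (Fin n) (Fin n) L) (w : Fin n → L),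
      (∑ i, g i) *ᵥ w = ∑ i, g i *ᵥ w := by
    intro g w
    induction (Finset.univ : Finset (Fin n)) using Finset.cons_induction with
    | empty => simp
    | cons a s ha ih => rw [Finset.sum_cons, Finset.sum_cons, Matrix.add_mulVec, ih]
  have hli : LinearIndependent L b := by
    rw [Fintype.linearIndependent_iff]
    intro g hg
    set q : L[X] := ∑ i : Fin n, C (g i) * X ^ (i : ℕ) with hq
    have hterm : ∀ i : Fin n, aeval A (C (g i) * X ^ (i : ℕ)) = g i • A ^ (i : ℕ) := by
      intro i
      rw [_root_.map_mul, aeval_C, map_pow, aeval_X, ← Algebra.smul_def]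
    have haq : aeval A q *ᵥ v = 0 := by
      rw [hq, map_sum, sum_mulVec]
      rw [show (∑ i : Fin n, aeval A (C (g i) * X ^ (i:ℕ)) *ᵥ v)
          = ∑ i : Fin n, g i • ((A ^ (i:ℕ)) *ᵥ v) from
        Finset.sum_congr rfl fun i _ => by rw [hterm i, Matrix.smul_mulVec]]
      exact hg
    have hmq := hv q haq
    have hq0 : q = 0 := by
      by_contra hq0
      have h1 := Polynomial.natDegree_le_of_dvd hmq hq0
      rw [A.charpoly_natDegree_eq_dim, Fintype.card_fin] at h1
      have h2 : q.natDegree ≤ n - 1 := by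
        rw [hq]
        apply Polynomial.natDegree_sum_le_of_forall_le
        intro i _
        refine le_trans (Polynomial.natDegree_mul_le) ?_
        simp only [Polynomial.natDegree_C, Polynomial.natDegree_X_pow, zero_add]
        omega
      omega
    intro i
    have hco : q.coeff (i : ℕ) = g i := by
      rw [hq, Polynomial.finset_sum_coeff]
      simp only [Polynomial.coeff_C_mul_X_pow]
      rw [Finset.sum_eq_single i (fun j _ hji =>
        if_neg (fun h => hji (Fin.val_injective h).symm)) (by simp)]
      exact if_pos rfl
    rw [← hco, hq0, Polynomial.coeff_zero]
  have hcard : Fintype.card (Fin n) = Module.finrank L (Fin n → L) := by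
    rw [Fintype.card_fin, Module.finrank_fin_fun]
  let B : Module.Basis (Fin n) L (Fin n → L) := basisOfLinearIndependentOfCardEqFinrank hli hcard
  have hBc : ⇑B = b := coe_basisOfLinearIndependentOfCardEqFinrank _ _
  have hGs : ∀ s : ℕ, (Aᵀ) ^ s * G = G * A ^ s := by
    intro s
    induction s with
    | zero => simp
    | succ t ih =>
      rw [pow_succ, mul_assoc, hG, ← mul_assoc, ih, mul_assoc, ← pow_succ]
  have hdot : ∀ s t : ℕ, (A ^ s *ᵥ v) ⬝ᵥ (G *ᵥ (A ^ t *ᵥ v)) = v ⬝ᵥ ((G * A ^ (s + t)) *ᵥ v) := by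
    intro s t
    have hmat : (A ^ s)ᵀ * (G * A ^ t) = G * A ^ (s + t) := by
      rw [Matrix.transpose_pow, ← mul_assoc, hGs s, mul_assoc, ← pow_add]
    calc (A ^ s *ᵥ v) ⬝ᵥ (G *ᵥ (A ^ t *ᵥ v))
        = (A ^ s *ᵥ v) ⬝ᵥ ((G * A ^ t) *ᵥ v) := by rw [Matrix.mulVec_mulVec]
      _ = (v ᵥ* (A ^ s)ᵀ) ⬝ᵥ ((G * A ^ t) *ᵥ v) := by rw [Matrix.vecMul_transpose]
      _ = v ⬝ᵥ ((A ^ s)ᵀ *ᵥ ((G * A ^ t) *ᵥ v)) := (Matrix.dotProduct_mulVec _ _ _).symm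
      _ = v ⬝ᵥ (((A ^ s)ᵀ * (G * A ^ t)) *ᵥ v) := by rw [Matrix.mulVec_mulVec]
      _ = v ⬝ᵥ ((G * A ^ (s + t)) *ᵥ v) := by rw [hmat]
  have hsymB : ∀ i j : Fin n, (b i) ⬝ᵥ (G *ᵥ b j) = (b j) ⬝ᵥ (G *ᵥ b i) := by
    intro i j
    rw [hb]
    dsimp only
    rw [hdot, hdot, Nat.add_comm]
  have heq : (Matrix.toLinearMap₂' (S₁ := L) (S₂ := L) L) Gᵀ = (Matrix.toLinearMap₂' (S₁ := L) (S₂ := L) L) G := by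
    apply LinearMap.ext_basis B B
    intro i j
    rw [Matrix.toLinearMap₂'_apply', Matrix.toLinearMap₂'_apply', hBc]
    rw [Matrix.dotProduct_mulVec, Matrix.vecMul_transpose, dotProduct_comm]
    exact hsymB j i
  exact (Matrix.toLinearMap₂' (S₁ := L) (S₂ := L) L).injective heq

/-- If `A ∈ SU(H)` has characteristic polynomial equal to its minimal
polynomial, and `A = A₁ A₂` with `A₁, A₂ ∈ GL(n,L)` satisfying
`Ā1 A₁ = I = Ā2 A₂`, then `A₁, A₂ ∈ U(H)`. -/
theorem stmt1 {k L : Type*} [Field k] [Field L] [Algebra k L]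
    (hchar : (2 : k) ≠ 0) (hquad : Module.finrank k L = 2)
    (σ : L ≃ₐ[k] L) (hσ : σ ≠ AlgEquiv.refl)
    {n : ℕ} (lam : Fin n → k) (hlam : ∀ i, lam i ≠ 0)
    (H : Matrix (Fin n) (Fin n) L)
    (hH : H = Matrix.diagonal fun i => algebraMap k L (lam i))
    (A : Matrix (Fin n) (Fin n) L) (hA_unit : IsUnit A)
    (hA_U : Aᵀ * H * A.map σ = H) (hA_det : A.det = 1)
    (hmin : A.charpoly = minpoly L A)
    (A₁ A₂ : Matrix (Fin n) (Fin n) L) (hA₁_unit : IsUnit A₁) (hA₂_unit : IsUnit A₂)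
    (hfac : A = A₁ * A₂)
    (h₁ : (A₁.map σ) * A₁ = 1) (h₂ : (A₂.map σ) * A₂ = 1) :
    A₁ᵀ * H * A₁.map σ = H ∧ A₂ᵀ * H * A₂.map σ = H := by
  classical
  have h₁' : A₁ * A₁.map ⇑σ = 1 := mul_eq_one_comm.mpr h₁
  have h₂' : A₂ * A₂.map ⇑σ = 1 := mul_eq_one_comm.mpr h₂
  have hAm : A.map ⇑σ = A₁.map ⇑σ * A₂.map ⇑σ := by
    rw [hfac]
    have h : (A₁ * A₂).map ⇑(σ : L →+* L) = A₁.map ⇑(σ : L →+* L) * A₂.map ⇑(σ : L →+* L) :=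
      Matrix.map_mul
    simpa using h
  have inv1 : (A₁.map ⇑σ * A₂.map ⇑σ) * (A₂ * A₁) = 1 := by
    rw [mul_assoc, ← mul_assoc (A₂.map ⇑σ), h₂, one_mul, h₁]
  have key4 : Aᵀ * H = H * (A₂ * A₁) := by
    have e1 : Aᵀ * H * (A.map ⇑σ) * (A₂ * A₁) = H * (A₂ * A₁) := by rw [hA_U]
    rw [hAm, mul_assoc (Aᵀ * H), inv1, mul_one] at e1
    exact e1
  have hGi : Aᵀ * (H * A₁.map ⇑σ) = (H * A₁.map ⇑σ) * A := by
    rw [← mul_assoc, key4, hfac]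
    calc H * (A₂ * A₁) * A₁.map ⇑σ = H * (A₂ * (A₁ * A₁.map ⇑σ)) := by
          rw [mul_assoc H, mul_assoc A₂]
      _ = H * A₂ := by rw [h₁', mul_one]
      _ = H * ((A₁.map ⇑σ * A₁) * A₂) := by rw [h₁, one_mul]
      _ = H * A₁.map ⇑σ * (A₁ * A₂) := by rw [mul_assoc (A₁.map ⇑σ), ← mul_assoc H, mul_assoc]
  have hGt : (H * A₁.map ⇑σ)ᵀ = H * A₁.map ⇑σ :=
    transpose_eq_of_intertwine A (H * A₁.map ⇑σ) hmin hGi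
  have hHt : Hᵀ = H := by rw [hH]; exact Matrix.diagonal_transpose _
  have hGt' : (A₁.map ⇑σ)ᵀ * H = H * A₁.map ⇑σ := by
    rw [← hGt, Matrix.transpose_mul, hHt]
  have goal1 : A₁ᵀ * H * A₁.map ⇑σ = H := by
    calc A₁ᵀ * H * A₁.map ⇑σ = A₁ᵀ * (H * A₁.map ⇑σ) := mul_assoc _ _ _
      _ = A₁ᵀ * ((A₁.map ⇑σ)ᵀ * H) := by rw [hGt']
      _ = (A₁.map ⇑σ * A₁)ᵀ * H := by rw [← mul_assoc, ← Matrix.transpose_mul]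
      _ = H := by rw [h₁, Matrix.transpose_one, one_mul]
  refine ⟨goal1, ?_⟩
  have e2 : A₁ᵀ * H = H * A₁ := by
    calc A₁ᵀ * H = A₁ᵀ * H * (A₁.map ⇑σ * A₁) := by rw [h₁, mul_one]
      _ = (A₁ᵀ * H * A₁.map ⇑σ) * A₁ := by rw [← mul_assoc]
      _ = H * A₁ := by rw [goal1]
  have e6 : A₂ᵀ * H * A₁ = H * A₂ * A₁ := by
    have e4 : Aᵀ = A₂ᵀ * A₁ᵀ := by rw [hfac, Matrix.transpose_mul]
    have e5 : A₂ᵀ * A₁ᵀ * H = H * (A₂ * A₁) := by rw [← e4, key4]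
    rw [mul_assoc, e2, ← mul_assoc] at e5
    rw [e5, mul_assoc]
  have e3 : A₂ᵀ * H = H * A₂ := by
    calc A₂ᵀ * H = A₂ᵀ * H * (A₁ * A₁.map ⇑σ) := by rw [h₁', mul_one]
      _ = (A₂ᵀ * H * A₁) * A₁.map ⇑σ := by rw [← mul_assoc]
      _ = (H * A₂ * A₁) * A₁.map ⇑σ := by rw [e6]
      _ = H * A₂ * (A₁ * A₁.map ⇑σ) := by rw [mul_assoc]
      _ = H * A₂ := by rw [h₁', mul_one]
  calc A₂ᵀ * H * A₂.map ⇑σ = H * A₂ * A₂.map ⇑σ := by rw [e3]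
    _ = H * (A₂ * A₂.map ⇑σ) := mul_assoc _ _ _
    _ = H := by rw [h₂', mul_one]
end

section
/- Let A ∈ SU(H) be such that its characteristic polynomial over L equals its minimal polynomial. Then there exist B_1, B_2 ∈ GL(n, L) with A = B_1 B_2 and B̄_1 B_1 = I = B̄_2 B_2. -/
open Matrix Polynomial DirectSum

lemma sigma_invol {k L : Type*} [Field k] [Field L] [Algebra k L]
    (hquad : Module.finrank k L = 2)
    (σ : L ≃ₐ[k] L) (hσ : σ ≠ AlgEquiv.refl) : ∀ x, σ (σ x) = x := by
  obtain ⟨z, hz⟩ : ∃ z, σ z ≠ z := by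
    by_contra h
    push_neg at h
    exact hσ (AlgEquiv.ext fun x => (h x).trans rfl)
  have hznk : ∀ c : k, algebraMap k L c ≠ z := by
    intro c hc
    exact hz (by rw [← hc, AlgEquiv.commutes])
  have li : LinearIndependent k ![1, z] := by
    rw [LinearIndependent.pair_iff]
    intro s t hst
    rw [Algebra.smul_def, Algebra.smul_def, mul_one] at hst
    by_cases ht : t = 0
    · subst ht
      refine ⟨?_, rfl⟩
      have : algebraMap k L s = 0 := by simpa using hst
      exact (algebraMap k L).injective (by simpa using this)
    · exfalso
      apply hznk (-s/t)
      have htL : algebraMap k L t ≠ 0 := fun h => ht ((algebraMap k L).injective (by simpa using h))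
      rw [map_div₀, map_neg]
      field_simp
      linear_combination -hst
  have hcard : Fintype.card (Fin 2) = Module.finrank k L := by simp [hquad]
  let B := basisOfLinearIndependentOfCardEqFinrank li hcard
  have hB : ∀ i, B i = ![1, z] i := fun i => by
    simp [B, coe_basisOfLinearIndependentOfCardEqFinrank]
  have hB0 : B 0 = 1 := hB 0
  have hB1 : B 1 = z := hB 1
  have hrepr : ∀ x : L, x = algebraMap k L (B.repr x 0) + algebraMap k L (B.repr x 1) * z := by
    intro x
    conv_lhs => rw [← B.sum_repr x]
    rw [Fin.sum_univ_two, hB0, hB1, Algebra.smul_def, Algebra.smul_def, mul_one]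
  set α : L := algebraMap k L (B.repr (z*z) 0) with hα
  set β : L := algebraMap k L (B.repr (z*z) 1) with hβ
  have hσα : σ α = α := σ.commutes _
  have hσβ : σ β = β := σ.commutes _
  have hzz : z * z = α + β * z := hrepr (z*z)
  have hσzz : σ z * σ z = α + β * σ z := by
    have := congrArg σ hzz
    rw [_root_.map_mul, _root_.map_add, _root_.map_mul, hσα, hσβ] at this
    exact this
  have hsum : σ z = β - z := by
    have hne : z - σ z ≠ 0 := sub_ne_zero.mpr (Ne.symm hz)
    have hkey : (z + σ z - β) * (z - σ z) = 0 := by linear_combination hzz - hσzz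
    rcases mul_eq_zero.mp hkey with h | h
    · linear_combination h
    · exact absurd h hne
  have hfixz : σ (σ z) = z := by
    rw [hsum, map_sub, hσβ, hsum]
    ring
  intro x
  conv_lhs => rw [hrepr x]
  simp only [_root_.map_add, _root_.map_mul, AlgEquiv.commutes, hfixz]
  exact (hrepr x).symm

section Aux

variable {L : Type*} [Field L] {n : ℕ}

lemma my_charpoly_transpose (M : Matrix (Fin n) (Fin n) L) : Mᵀ.charpoly = M.charpoly := by
  rw [Matrix.charpoly, Matrix.charpoly, ← Matrix.det_transpose (charmatrix M)]
  congr 1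
  ext i j
  simp [charmatrix_apply, Matrix.transpose_apply, Matrix.diagonal_apply]
  by_cases h : i = j <;> simp [h, eq_comm]

lemma my_charpoly_conj (P B : Matrix (Fin n) (Fin n) L) (hP : IsUnit P.det) :
    (P⁻¹ * B * P).charpoly = B.charpoly := by
  have h1 : P⁻¹ * P = 1 := Matrix.nonsing_inv_mul P hP
  have hC : ((P⁻¹).map (C : L →+* L[X])) * (P.map C) = 1 := by
    rw [← Matrix.map_mul, h1, Matrix.map_one _ (map_zero C) (map_one C)]
  have key : charmatrix (P⁻¹ * B * P) = ((P⁻¹).map C) * charmatrix B * (P.map C) := by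
    rw [charmatrix, charmatrix]
    simp only [RingHom.mapMatrix_apply, Matrix.map_mul]
    rw [Matrix.mul_sub, Matrix.sub_mul]
    congr 1
    rw [Matrix.scalar_apply, ← Matrix.smul_one_eq_diagonal, Matrix.mul_smul, mul_one,
        Matrix.smul_mul, hC, Matrix.smul_one_eq_diagonal]
  rw [Matrix.charpoly, Matrix.charpoly, key, Matrix.det_mul, Matrix.det_mul]
  have : ((P⁻¹).map (C : L →+* L[X])).det * (P.map C).det = 1 := by
    rw [← Matrix.det_mul, hC, Matrix.det_one]
  calc ((P⁻¹).map (C : L →+* L[X])).det * (charmatrix B).det * (P.map C).det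
      = ((P⁻¹).map (C : L →+* L[X])).det * (P.map C).det * (charmatrix B).det := by ring
    _ = (charmatrix B).det := by rw [this, one_mul]

lemma coeff_rel {k : Type*} [Field k] [Algebra k L] (σ : L ≃ₐ[k] L)
    (lam : Fin n → k) (hlam : ∀ i, lam i ≠ 0) (H : Matrix (Fin n) (Fin n) L)
    (hH : H = Matrix.diagonal fun i => algebraMap k L (lam i))
    (A : Matrix (Fin n) (Fin n) L) (hA_U : Aᵀ * H * A.map σ = H) (hA_det : A.det = 1) :
    ∀ j ≤ n, σ (A.charpoly.coeff j) = (-1)^n * A.charpoly.coeff (n - j) := by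
  have hHdet : IsUnit H.det := by
    rw [hH, Matrix.det_diagonal]
    apply isUnit_iff_ne_zero.mpr
    apply Finset.prod_ne_zero_iff.mpr
    intro i _
    simpa using fun h => hlam i ((algebraMap k L).injective (by simpa using h))
  have hATdet : IsUnit (Aᵀ).det := by rw [Matrix.det_transpose, hA_det]; exact isUnit_one
  have hAdet : IsUnit A.det := by rw [hA_det]; exact isUnit_one
  -- step 1 : A.map σ = H⁻¹ * (Aᵀ)⁻¹ * H
  have step1 : A.map σ = H⁻¹ * (Aᵀ)⁻¹ * H := by
    have e1 : H * A.map σ = (Aᵀ)⁻¹ * H := by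
      calc H * A.map σ = (Aᵀ)⁻¹ * (Aᵀ * H * A.map σ) := by
            rw [Matrix.mul_assoc Aᵀ, ← Matrix.mul_assoc (Aᵀ)⁻¹, Matrix.nonsing_inv_mul _ hATdet,
              Matrix.one_mul]
        _ = (Aᵀ)⁻¹ * H := by rw [hA_U]
    calc A.map σ = H⁻¹ * (H * A.map σ) := by
          rw [← Matrix.mul_assoc, Matrix.nonsing_inv_mul _ hHdet, Matrix.one_mul]
      _ = H⁻¹ * (Aᵀ)⁻¹ * H := by rw [e1, Matrix.mul_assoc]
  -- step 2
  have step2 : (A.map σ).charpoly = (A⁻¹).charpoly := by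
    rw [step1, my_charpoly_conj H _ hHdet, ← Matrix.transpose_nonsing_inv,
      my_charpoly_transpose]
  -- step 4 : (A⁻¹).charpoly = (-1)^n * reverse
  have hAA : A * A⁻¹ = 1 := Matrix.mul_nonsing_inv A hAdet
  have step4 : (A⁻¹).charpoly = (-1 : L[X])^n * A.charpoly.reverse := by
    have e2 : (A.map (C : L →+* L[X])) * charmatrix (A⁻¹)
        = -(1 - (X : L[X]) • A.map C) := by
      rw [charmatrix]
      simp only [RingHom.mapMatrix_apply]
      rw [Matrix.mul_sub, ← Matrix.map_mul, hAA,
        Matrix.map_one _ (map_zero C) (map_one C), Matrix.scalar_apply,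
        ← Matrix.smul_one_eq_diagonal, Matrix.mul_smul, mul_one]
      rw [neg_sub]
    have e3 := congrArg Matrix.det e2
    rw [Matrix.det_mul, ← Matrix.charpoly, Matrix.det_neg, ← Matrix.charpolyRev,
      ← Matrix.reverse_charpoly] at e3
    have e4 : (A.map (C : L →+* L[X])).det = 1 := by
      rw [← RingHom.mapMatrix_apply, ← RingHom.map_det, hA_det, Polynomial.C_1]
    rw [e4, one_mul] at e3
    simpa [Fintype.card_fin] using e3
  -- step 0
  have step0 : (A.map σ).charpoly = A.charpoly.map (σ : L →+* L) := by
    have := Matrix.charpoly_map A ((σ : L ≃ₐ[k] L) : L →+* L)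
    convert this using 2
    rfl
  have main : A.charpoly.map (σ : L →+* L) = (-1 : L[X])^n * A.charpoly.reverse := by
    rw [← step0, step2, step4]
  intro j hj
  have hdeg : A.charpoly.natDegree = n := by
    simpa [Fintype.card_fin] using A.charpoly_natDegree_eq_dim
  have hc := congrArg (fun q => Polynomial.coeff q j) main
  rw [Polynomial.coeff_map] at hc
  have hpow : ((-1 : L[X])^n) = Polynomial.C ((-1 : L)^n) := by
    rw [map_pow, map_neg, Polynomial.C_1]
  rw [hpow, Polynomial.coeff_C_mul, Polynomial.coeff_reverse, hdeg,
    Polynomial.revAt_le hj] at hc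
  exact hc


/-- companion-type matrix from a coefficient function -/
def compM (a : ℕ → L) : Matrix (Fin n) (Fin n) L :=
  Matrix.of fun i j => if (j:ℕ) = n - 1 then -(a i) else if (i:ℕ) = (j:ℕ) + 1 then 1 else 0

/-- antidiagonal flip matrix -/
def flipM : Matrix (Fin n) (Fin n) L :=
  Matrix.of fun i j => if j = i.rev then 1 else 0

lemma flipM_mul (B : Matrix (Fin n) (Fin n) L) :
    (flipM * B : Matrix (Fin n) (Fin n) L) = Matrix.of fun i j => B i.rev j := by
  ext i j
  simp [flipM, Matrix.mul_apply, ite_mul]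

lemma mul_flipM (B : Matrix (Fin n) (Fin n) L) :
    (B * flipM : Matrix (Fin n) (Fin n) L) = Matrix.of fun i j => B i j.rev := by
  ext i j
  simp only [Matrix.mul_apply, flipM, Matrix.of_apply, mul_ite, mul_one, mul_zero]
  rw [Finset.sum_eq_single j.rev]
  · simp
  · intro b _ hb
    rw [if_neg]
    intro h
    exact hb (by rw [h, Fin.rev_rev])
  · simp
lemma flipM_mul_flipM : (flipM * flipM : Matrix (Fin n) (Fin n) L) = 1 := by
  rw [flipM_mul]
  ext i j
  simp [flipM, Matrix.one_apply, eq_comm, Fin.rev_eq_iff]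

lemma flipM_map (σ : L →+* L) : (flipM : Matrix (Fin n) (Fin n) L).map σ = flipM := by
  ext i j
  simp [flipM, apply_ite σ]

lemma compM_apply (a : ℕ → L) (i j : Fin n) :
    compM a i j = if (j:ℕ) = n - 1 then -(a i) else if (i:ℕ) = (j:ℕ) + 1 then 1 else 0 := rfl

lemma comp_key (σ : L →+* L) (a : ℕ → L) (han : a n = 1)
    (hrel : ∀ j ≤ n, σ (a j) = (-1)^n * a (n - j)) :
    (compM a : Matrix (Fin n) (Fin n) L) * (flipM * (compM a).map σ * flipM) = 1 := by
  rcases Nat.eq_zero_or_pos n with hn | hn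
  · subst hn; exact Subsingleton.elim _ _
  have ha0 : (1 : L) = (-1)^n * a 0 := by
    have := hrel n le_rfl
    rw [han, _root_.map_one, Nat.sub_self] at this
    exact this
  have hN : (flipM * (compM a).map σ * flipM : Matrix (Fin n) (Fin n) L) =
      Matrix.of (fun (i j : Fin n) => if (j:ℕ) = 0 then -((-1)^n * a ((i:ℕ)+1))
        else if (i:ℕ) + 1 = (j:ℕ) then 1 else 0) := by
    rw [flipM_mul, mul_flipM]
    ext i j
    simp only [Matrix.of_apply, Matrix.map_apply]
    have hilt : (i:ℕ) < n := i.isLt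
    have hjlt : (j:ℕ) < n := j.isLt
    rw [compM_apply]
    by_cases hj : (j:ℕ) = 0
    · rw [if_pos (by rw [Fin.val_rev]; omega : (j.rev:ℕ) = n - 1), if_pos hj, map_neg,
        Fin.val_rev, hrel (n - ((i:ℕ) + 1)) (by omega)]
      have h2 : n - (n - ((i:ℕ) + 1)) = (i:ℕ) + 1 := by omega
      rw [h2]
    · rw [if_neg (by rw [Fin.val_rev]; omega : ¬ ((j.rev:ℕ) = n - 1)), if_neg hj]
      by_cases hij : (i:ℕ) + 1 = (j:ℕ)
      · rw [if_pos (by rw [Fin.val_rev, Fin.val_rev]; omega : (i.rev:ℕ) = (j.rev:ℕ) + 1),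
          if_pos hij, _root_.map_one]
      · rw [if_neg (by rw [Fin.val_rev, Fin.val_rev]; omega : ¬ ((i.rev:ℕ) = (j.rev:ℕ) + 1)),
          if_neg hij, map_zero]
  rw [hN]
  obtain ⟨m, rfl⟩ : ∃ m, n = m + 1 := ⟨n - 1, by omega⟩
  ext i j
  rw [Matrix.mul_apply]
  simp only [Matrix.of_apply]
  have hilt : (i:ℕ) < m + 1 := i.isLt
  have hjlt : (j:ℕ) < m + 1 := j.isLt
  by_cases hj : (j:ℕ) = 0
  · simp only [if_pos hj]
    rw [Fin.sum_univ_castSucc]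
    have hlast : compM a i (Fin.last m) * -((-1)^(m+1) * a ((Fin.last m : ℕ)+1))
        = a (i:ℕ) * (-1)^(m+1) := by
      rw [compM_apply, if_pos (by rw [Fin.val_last]; omega : ((Fin.last m : ℕ) = m + 1 - 1)),
        Fin.val_last, han]
      ring
    rw [hlast]
    by_cases hi : (i:ℕ) = 0
    · have hsum0 : ∀ s : Fin m,
          compM a i s.castSucc * -((-1)^(m+1) * a ((s.castSucc:ℕ)+1)) = 0 := by
        intro s
        have hslt : (s:ℕ) < m := s.isLt
        rw [compM_apply, if_neg (by rw [Fin.coe_castSucc]; omega),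
          if_neg (by rw [Fin.coe_castSucc]; omega), zero_mul]
      rw [Finset.sum_eq_zero (fun s _ => hsum0 s), zero_add]
      have hij : i = j := Fin.ext (by omega)
      rw [hij, Matrix.one_apply_eq]
      have hi0 : a (j:ℕ) = a 0 := by rw [hj]
      rw [hi0]
      linear_combination -ha0
    · have hstep : ∑ s : Fin m,
          compM a i s.castSucc * -((-1)^(m+1) * a ((s.castSucc:ℕ)+1))
          = -(a (i:ℕ) * (-1)^(m+1)) := by
        have hi1m : (i:ℕ) - 1 < m := by omega
        rw [Finset.sum_eq_single (⟨(i:ℕ)-1, hi1m⟩ : Fin m)]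
        · rw [compM_apply, if_neg (by rw [Fin.coe_castSucc]; show ¬ ((i:ℕ)-1 = m + 1 - 1); omega),
            if_pos (by rw [Fin.coe_castSucc]; show (i:ℕ) = (i:ℕ)-1 + 1; omega), one_mul]
          have h3 : ((⟨(i:ℕ)-1, hi1m⟩ : Fin m).castSucc : ℕ) + 1 = (i:ℕ) := by
            rw [Fin.coe_castSucc]; show (i:ℕ)-1 + 1 = (i:ℕ); omega
          rw [h3]
          ring
        · intro b _ hb
          have hbne : (b:ℕ) ≠ (i:ℕ) - 1 := fun h => hb (Fin.ext h)
          have hblt : (b:ℕ) < m := b.isLt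
          rw [compM_apply, if_neg (by rw [Fin.coe_castSucc]; omega),
            if_neg (by rw [Fin.coe_castSucc]; omega), zero_mul]
        · intro h
          exact absurd (Finset.mem_univ _) h
      rw [hstep]
      have hij : i ≠ j := fun h => hi (by rw [h]; exact hj)
      rw [Matrix.one_apply_ne hij]
      ring
  · simp only [if_neg hj]
    have hj1 : (j:ℕ) - 1 < m + 1 := by omega
    rw [Finset.sum_eq_single (⟨(j:ℕ)-1, hj1⟩ : Fin (m+1))]
    · rw [if_pos (show ((j:ℕ)-1) + 1 = (j:ℕ) by omega),
        mul_one, compM_apply,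
        if_neg (show ¬ ((j:ℕ)-1 = m + 1 - 1) by omega)]
      by_cases hij : i = j
      · rw [if_pos (show (i:ℕ) = ((j:ℕ)-1) + 1 by rw [hij]; omega),
          hij, Matrix.one_apply_eq]
      · rw [if_neg (fun h => hij (Fin.ext (by have h' : (i:ℕ) = (j:ℕ)-1 + 1 := h; omega))),
          Matrix.one_apply_ne hij]
    · intro b _ hb
      rw [if_neg (fun h => hb (Fin.ext (show (b:ℕ) = (j:ℕ)-1 by
          have h' : (b:ℕ) + 1 = (j:ℕ) := h; omega))), mul_zero]
    · intro h
      exact absurd (Finset.mem_univ _) h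

lemma my_sum_mulVec {ι : Type*} (s : Finset ι) (f : ι → Matrix (Fin n) (Fin n) L)
    (v : Fin n → L) : (∑ i ∈ s, f i) *ᵥ v = ∑ i ∈ s, (f i) *ᵥ v := by
  induction s using Finset.cons_induction with
  | empty => simp [Matrix.zero_mulVec]
  | cons a s ha ih => rw [Finset.sum_cons, Finset.sum_cons, Matrix.add_mulVec, ih]

lemma my_mulVec_apply (M : Matrix (Fin n) (Fin n) L) (u : Fin n → L) (i : Fin n) :
    (M *ᵥ u) i = ∑ s, M i s * u s := rfl


set_option maxHeartbeats 1000000 in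
lemma exists_cyclic {L : Type*} [Field L] {n : ℕ} (hn : 0 < n)
    (A : Matrix (Fin n) (Fin n) L) (hmin : A.charpoly = minpoly L A) :
    ∃ v : Fin n → L, LinearIndependent L (fun j : Fin n => (A ^ (j:ℕ)).mulVec v) := by
  classical
  set φ : Module.End L (Fin n → L) := Matrix.toLinAlgEquiv' A with hφdef
  have hφ : ∀ q : L[X], aeval φ q = Matrix.toLinAlgEquiv' (aeval A q) := by
    intro q
    exact Polynomial.aeval_algHom_apply (Matrix.toLinAlgEquiv'.toAlgHom) A q
  have hdeg : (minpoly L A).natDegree = n := by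
    rw [← hmin]
    simpa [Fintype.card_fin] using A.charpoly_natDegree_eq_dim
  -- the AEval module
  have hsmul : ∀ (q : L[X]) (x : Module.AEval' φ),
      (Module.AEval'.of φ).symm (q • x) = (aeval A q).mulVec ((Module.AEval'.of φ).symm x) := by
    intro q x
    rw [Module.AEval.of_symm_smul]
    change aeval φ q ((Module.AEval'.of φ).symm x) = _
    rw [hφ, Matrix.toLinAlgEquiv'_apply]
  have htor : Module.IsTorsion L[X] (Module.AEval' φ) := by
    intro x
    refine ⟨⟨A.charpoly, mem_nonZeroDivisors_of_ne_zero (A.charpoly_monic.ne_zero)⟩, ?_⟩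
    apply (Module.AEval'.of φ).symm.injective
    rw [map_zero]
    show (Module.AEval'.of φ).symm (A.charpoly • x) = 0
    rw [hsmul, Matrix.aeval_self_charpoly, Matrix.zero_mulVec]
  obtain ⟨ι, hfin, p, hp, e, ⟨Ψ⟩⟩ := Module.equiv_directSum_of_isTorsion htor
  set Q : ι → Type _ := fun i => L[X] ⧸ (Submodule.span L[X] {p i ^ e i}) with hQ
  set gen : ∀ i, Q i := fun i => Submodule.Quotient.mk 1 with hgen
  set v' : Module.AEval' φ := Ψ.symm (∑ i, DirectSum.lof L[X] ι Q i (gen i)) with hv'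
  set v : Fin n → L := (Module.AEval'.of φ).symm v' with hv
  refine ⟨v, ?_⟩
  rw [Fintype.linearIndependent_iff]
  intro c hc
  set s : L[X] := ∑ j : Fin n, Polynomial.C (c j) * X ^ (j:ℕ) with hs
  -- coefficients of s
  have hcoeff : ∀ d : ℕ, s.coeff d = if h : d < n then c ⟨d, h⟩ else 0 := by
    intro d
    rw [hs, Polynomial.finset_sum_coeff]
    by_cases h : d < n
    · rw [dif_pos h, Finset.sum_eq_single (⟨d, h⟩ : Fin n)]
      · simp [Polynomial.coeff_C_mul, Polynomial.coeff_X_pow]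
      · intro b _ hb
        rw [Polynomial.coeff_C_mul, Polynomial.coeff_X_pow,
          if_neg (fun hdb => hb (Fin.ext hdb.symm)), mul_zero]
      · intro h'; exact absurd (Finset.mem_univ _) h'
    · rw [dif_neg h]
      apply Finset.sum_eq_zero
      intro b _
      rw [Polynomial.coeff_C_mul, Polynomial.coeff_X_pow,
        if_neg (fun hdb => h (by rw [hdb]; exact b.isLt)), mul_zero]
  -- aeval φ s kills v
  have hkillv : aeval φ s v = 0 := by
    have h1 : aeval φ s = ∑ j : Fin n, c j • φ ^ (j:ℕ) := by
      rw [hs, map_sum]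
      refine Finset.sum_congr rfl (fun j _ => ?_)
      rw [_root_.map_mul, Polynomial.aeval_C, Polynomial.aeval_X_pow,
        Algebra.algebraMap_eq_smul_one, smul_mul_assoc, one_mul]
    rw [h1, LinearMap.sum_apply]
    have h2 : ∀ j : Fin n, (c j • φ ^ (j:ℕ)) v = c j • (A ^ (j:ℕ)).mulVec v := by
      intro j
      rw [LinearMap.smul_apply]
      congr 1
      rw [hφdef, ← map_pow, Matrix.toLinAlgEquiv'_apply]
    rw [Finset.sum_congr rfl (fun j _ => h2 j), hc]
  have hsv' : s • v' = 0 := by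
    apply (Module.AEval'.of φ).symm.injective
    rw [map_zero, Module.AEval.of_symm_smul]
    show aeval φ s ((Module.AEval'.of φ).symm v') = 0
    rw [← hv]
    exact hkillv
  have hcompz : ∀ i, s • gen i = 0 := by
    have h0 : (0 : ⨁ i, Q i) = ∑ i, DirectSum.lof L[X] ι Q i (s • gen i) := by
      calc (0 : ⨁ i, Q i) = Ψ (s • v') := by rw [hsv', map_zero]
        _ = s • Ψ v' := by rw [_root_.map_smul]
        _ = s • ∑ i, DirectSum.lof L[X] ι Q i (gen i) := by rw [hv', Ψ.apply_symm_apply]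
        _ = ∑ i, s • DirectSum.lof L[X] ι Q i (gen i) := Finset.smul_sum
        _ = ∑ i, DirectSum.lof L[X] ι Q i (s • gen i) := by
              refine Finset.sum_congr rfl (fun i _ => ?_)
              rw [_root_.map_smul]
    intro i
    have h1 := congrArg (DirectSum.component L[X] ι Q i) h0
    rw [map_zero, map_sum] at h1
    rw [Finset.sum_eq_single i] at h1
    · rw [DirectSum.component.lof_self] at h1
      exact h1.symm
    · intro b _ hb
      rw [DirectSum.component.of, dif_neg hb]
    · intro h; exact absurd (Finset.mem_univ _) h
  have hsspan : ∀ i, s ∈ Submodule.span L[X] {p i ^ e i} := by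
    intro i
    have := hcompz i
    rw [hgen] at this
    have h2 : (Submodule.Quotient.mk (s • (1:L[X])) : Q i) = 0 := by
      rw [Submodule.Quotient.mk_smul]
      exact this
    rw [smul_eq_mul, mul_one] at h2
    exact (Submodule.Quotient.mk_eq_zero _).mp h2
  have hkillall : ∀ x : Module.AEval' φ, s • x = 0 := by
    have hy : ∀ y : ⨁ i, Q i, s • y = 0 := by
      intro y
      induction y using DirectSum.induction_on with
      | zero => rw [smul_zero]
      | of j b =>
          obtain ⟨r, rfl⟩ := Submodule.Quotient.mk_surjective _ b
          rw [← DirectSum.lof_eq_of L[X], ← _root_.map_smul]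
          have h3 : s • (Submodule.Quotient.mk r : Q j) = 0 := by
            rw [← Submodule.Quotient.mk_smul, Submodule.Quotient.mk_eq_zero]
            obtain ⟨t, ht⟩ := Submodule.mem_span_singleton.mp (hsspan j)
            refine Submodule.mem_span_singleton.mpr ⟨r * t, ?_⟩
            rw [smul_eq_mul] at ht ⊢
            rw [smul_eq_mul]
            linear_combination r * ht
          rw [h3, map_zero]
      | add a b ha hb => rw [smul_add, ha, hb, add_zero]
    intro x
    have h6 : Ψ (s • x) = 0 := by rw [_root_.map_smul, hy]
    have h7 := congrArg Ψ.symm h6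
    rwa [Ψ.symm_apply_apply, map_zero] at h7
  have hAs : aeval A s = 0 := by
    apply Matrix.toLinAlgEquiv'.injective
    rw [← hφ, map_zero]
    apply LinearMap.ext
    intro w
    have h4 := hkillall (Module.AEval'.of φ w)
    have h5 := congrArg (Module.AEval'.of φ).symm h4
    rw [map_zero, Module.AEval.of_symm_smul] at h5
    show aeval φ s w = 0
    rw [← h5]
    show aeval φ s w = aeval φ s ((Module.AEval'.of φ).symm ((Module.AEval'.of φ) w))
    rw [LinearEquiv.symm_apply_apply]
  have hs0 : s = 0 := by
    by_contra hsne
    have hdvd : minpoly L A ∣ s := minpoly.dvd L A hAs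
    have hle := Polynomial.natDegree_le_of_dvd hdvd hsne
    rw [hdeg] at hle
    have hlc : s.coeff s.natDegree ≠ 0 := by
      rw [← Polynomial.leadingCoeff]
      exact Polynomial.leadingCoeff_ne_zero.mpr hsne
    rw [hcoeff s.natDegree, dif_neg (by omega)] at hlc
    exact hlc rfl
  intro j
  have h6 := hcoeff (j:ℕ)
  rw [hs0, Polynomial.coeff_zero, dif_pos j.isLt] at h6
  have : (⟨(j:ℕ), j.isLt⟩ : Fin n) = j := Fin.eta j j.isLt
  rw [this] at h6
  exact h6.symm

lemma exists_conj (hn : 0 < n) (A : Matrix (Fin n) (Fin n) L)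
    (hmin : A.charpoly = minpoly L A) :
    ∃ T U : Matrix (Fin n) (Fin n) L, T * U = 1 ∧ U * T = 1 ∧
      A * T = T * compM (fun d => A.charpoly.coeff d) := by
  haveI : Nonempty (Fin n) := ⟨⟨0, hn⟩⟩
  obtain ⟨v, hli⟩ := exists_cyclic hn A hmin
  set w : Fin n → (Fin n → L) := fun j => (A ^ (j:ℕ)).mulVec v with hw
  have hcard : Fintype.card (Fin n) = Module.finrank L (Fin n → L) := by
    rw [Module.finrank_fintype_fun_eq_card]
  let b := basisOfLinearIndependentOfCardEqFinrank hli hcard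
  have hb : ∀ j, b j = w j := fun j =>
    congrFun (coe_basisOfLinearIndependentOfCardEqFinrank hli hcard) j
  let e := Pi.basisFun L (Fin n)
  set T := e.toMatrix (fun j => b j) with hT
  set U := b.toMatrix (fun j => e j) with hU
  have h1 : T * U = 1 := by
    rw [hT, hU]
    have := Module.Basis.toMatrix_mul_toMatrix_flip e b
    simpa using this
  have h2 : U * T = 1 := by
    rw [hT, hU]
    have := Module.Basis.toMatrix_mul_toMatrix_flip b e
    simpa using this
  have hTe : ∀ i j, T i j = w j i := by
    intro i j
    rw [hT, Module.Basis.toMatrix_apply, hb, Pi.basisFun_repr]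
  refine ⟨T, U, h1, h2, ?_⟩
  -- Cayley-Hamilton
  have hdeg : A.charpoly.natDegree = n := by
    simpa [Fintype.card_fin] using A.charpoly_natDegree_eq_dim
  have hCH : (A ^ n : Matrix (Fin n) (Fin n) L)
      = -∑ s : Fin n, (A.charpoly.coeff (s:ℕ)) • A ^ (s:ℕ) := by
    have h := Matrix.aeval_self_charpoly A
    rw [Polynomial.aeval_eq_sum_range, hdeg, Finset.sum_range_succ] at h
    have hmonic : A.charpoly.coeff n = 1 := by
      have := A.charpoly_monic
      rw [Polynomial.Monic.def, Polynomial.leadingCoeff, hdeg] at this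
      exact this
    rw [hmonic, one_smul] at h
    rw [Fin.sum_univ_eq_sum_range (fun d => A.charpoly.coeff d • A ^ d)]
    exact eq_neg_of_add_eq_zero_right h
  ext i j
  rw [Matrix.mul_apply, Matrix.mul_apply]
  have hlhs : ∑ s, A i s * T s j = (A *ᵥ w j) i := by
    rw [my_mulVec_apply]
    exact Finset.sum_congr rfl (fun s _ => by rw [hTe])
  rw [hlhs]
  by_cases hj : (j:ℕ) = n - 1
  · -- last column
    have hjn : (j:ℕ) + 1 = n := by have := j.isLt; omega
    have hwj : A *ᵥ w j = (A ^ n) *ᵥ v := by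
      rw [hw]
      rw [Matrix.mulVec_mulVec, ← pow_succ', hjn]
    rw [hwj, hCH, Matrix.neg_mulVec, my_sum_mulVec]
    have hterm : ∀ s : Fin n, T i s * compM (fun d => A.charpoly.coeff d) s j
        = -(A.charpoly.coeff (s:ℕ) • ((A ^ (s:ℕ)) *ᵥ v)) i := by
      intro s
      rw [compM_apply, if_pos hj, hTe, hw]
      simp only [Pi.neg_apply, Pi.smul_apply, smul_eq_mul]
      ring
    rw [Finset.sum_congr rfl (fun s _ => hterm s)]
    simp [Matrix.smul_mulVec, Finset.sum_apply, Pi.neg_apply, Pi.smul_apply,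
      Finset.sum_neg_distrib]
  · -- shift column
    have hjlt : (j:ℕ) < n := j.isLt
    have hj1 : (j:ℕ) + 1 < n := by omega
    have hwj : A *ᵥ w j = w ⟨(j:ℕ)+1, hj1⟩ := by
      rw [hw, Matrix.mulVec_mulVec, ← pow_succ']
    rw [hwj, Finset.sum_eq_single (⟨(j:ℕ)+1, hj1⟩ : Fin n)]
    · rw [compM_apply, if_neg (show ¬ (((j:ℕ)) = n-1) from hj),
        if_pos (show (((⟨(j:ℕ)+1, hj1⟩ : Fin n)):ℕ) = (j:ℕ)+1 from rfl), mul_one, hTe]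
    · intro s _ hs
      rw [compM_apply, if_neg hj, if_neg (fun h => hs (Fin.ext h)), mul_zero]
    · intro h; exact absurd (Finset.mem_univ _) h

end Aux

/-- If `A ∈ SU(H)` has characteristic polynomial equal to its minimal
polynomial, then there exist `B₁, B₂ ∈ GL(n,L)` with `A = B₁ B₂` and
`B̄₁ B₁ = I = B̄₂ B₂`. -/
theorem stmt2 {k L : Type*} [Field k] [Field L] [Algebra k L]
    (hchar : (2 : k) ≠ 0) (hquad : Module.finrank k L = 2)
    (σ : L ≃ₐ[k] L) (hσ : σ ≠ AlgEquiv.refl)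
    {n : ℕ} (lam : Fin n → k) (hlam : ∀ i, lam i ≠ 0)
    (H : Matrix (Fin n) (Fin n) L)
    (hH : H = Matrix.diagonal fun i => algebraMap k L (lam i))
    (A : Matrix (Fin n) (Fin n) L) (hA_unit : IsUnit A)
    (hA_U : Aᵀ * H * A.map σ = H) (hA_det : A.det = 1)
    (hmin : A.charpoly = minpoly L A) :
    ∃ B₁ B₂ : Matrix (Fin n) (Fin n) L, IsUnit B₁ ∧ IsUnit B₂ ∧
      A = B₁ * B₂ ∧ (B₁.map σ) * B₁ = 1 ∧ (B₂.map σ) * B₂ = 1 := by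
  rcases Nat.eq_zero_or_pos n with hn0 | hn
  · subst hn0
    exact ⟨1, 1, isUnit_one, isUnit_one, Subsingleton.elim _ _,
      Subsingleton.elim _ _, Subsingleton.elim _ _⟩
  have hσ2 : ∀ x, σ (σ x) = x := sigma_invol hquad σ hσ
  -- matrix-level map lemmas
  have hmapmul : ∀ X Y : Matrix (Fin n) (Fin n) L, (X * Y).map σ = X.map σ * Y.map σ := by
    intro X Y
    ext i j
    simp [Matrix.map_apply, Matrix.mul_apply, map_sum]
  have hmapone : (1 : Matrix (Fin n) (Fin n) L).map σ = 1 := by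
    ext i j
    simp [Matrix.one_apply, apply_ite σ]
  have hmap2 : ∀ X : Matrix (Fin n) (Fin n) L, (X.map σ).map σ = X := by
    intro X
    ext i j
    simp [Matrix.map_apply, hσ2]
  set a : ℕ → L := fun d => A.charpoly.coeff d with ha
  have hdeg : A.charpoly.natDegree = n := by
    simpa [Fintype.card_fin] using A.charpoly_natDegree_eq_dim
  have han : a n = 1 := by
    have := A.charpoly_monic
    rw [Polynomial.Monic.def, Polynomial.leadingCoeff, hdeg] at this
    exact this
  have hrel : ∀ j ≤ n, σ (a j) = (-1)^n * a (n - j) :=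
    coeff_rel σ lam hlam H hH A hA_U hA_det
  obtain ⟨T, U, hTU, hUT, hAT⟩ := exists_conj hn A hmin
  set Cm : Matrix (Fin n) (Fin n) L := compM a with hCm
  set J : Matrix (Fin n) (Fin n) L := flipM with hJ
  have hkey : Cm * (J * Cm.map σ * J) = 1 := by
    exact comp_key (RingHomClass.toRingHom σ) a han (fun j hj => hrel j hj)
  have hNC : (J * Cm.map σ * J) * Cm = 1 := mul_eq_one_comm.mp hkey
  have hJJ : J * J = 1 := flipM_mul_flipM
  have hJmap : J.map σ = J := by
    ext i j
    simp [hJ, flipM, apply_ite σ]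
  set Tb : Matrix (Fin n) (Fin n) L := T.map σ with hTb
  set Ub : Matrix (Fin n) (Fin n) L := U.map σ with hUb
  have hTbUb : Tb * Ub = 1 := by rw [hTb, hUb, ← hmapmul, hTU, hmapone]
  have hUbTb : Ub * Tb = 1 := by rw [hTb, hUb, ← hmapmul, hUT, hmapone]
  refine ⟨T * J * Ub, Tb * (J * Cm) * U, ?_, ?_, ?_, ?_, ?_⟩
  · -- IsUnit B₁
    refine ⟨⟨T * J * Ub, Tb * J * U, ?_, ?_⟩, rfl⟩
    · show T * J * Ub * (Tb * J * U) = 1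
      calc T * J * Ub * (Tb * J * U) = T * J * (Ub * Tb) * J * U := by
            simp only [Matrix.mul_assoc]
        _ = T * (J * J) * U := by rw [hUbTb]; simp only [Matrix.mul_assoc, Matrix.mul_one]
        _ = 1 := by rw [hJJ, Matrix.mul_one, hTU]
    · show Tb * J * U * (T * J * Ub) = 1
      calc Tb * J * U * (T * J * Ub) = Tb * J * (U * T) * J * Ub := by
            simp only [Matrix.mul_assoc]
        _ = Tb * (J * J) * Ub := by rw [hUT]; simp only [Matrix.mul_assoc, Matrix.mul_one]
        _ = 1 := by rw [hJJ, Matrix.mul_one, hTbUb]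
  · -- IsUnit B₂
    refine ⟨⟨Tb * (J * Cm) * U, (T * (J * Cm.map σ) * Ub), ?_, ?_⟩, rfl⟩
    · show Tb * (J * Cm) * U * (T * (J * Cm.map σ) * Ub) = 1
      calc Tb * (J * Cm) * U * (T * (J * Cm.map σ) * Ub)
          = Tb * (J * (Cm * ((U * T) * (J * (Cm.map σ * Ub))))) := by
            simp only [Matrix.mul_assoc]
        _ = Tb * (J * (Cm * (J * (Cm.map σ * Ub)))) := by rw [hUT, Matrix.one_mul]
        _ = Tb * ((J * (Cm * (J * Cm.map σ))) * Ub) := by simp only [Matrix.mul_assoc]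
        _ = 1 := by
            have h5 : J * (Cm * (J * Cm.map σ)) = 1 := by
              have h6 : (J * Cm.map σ * J) * Cm = 1 := hNC
              have h7 : Cm * (J * Cm.map σ * J) = 1 := hkey
              calc J * (Cm * (J * Cm.map σ)) = J * (Cm * (J * Cm.map σ * (J * J))) := by
                    rw [hJJ, Matrix.mul_one]
                _ = J * ((Cm * (J * Cm.map σ * J)) * J) := by simp only [Matrix.mul_assoc]
                _ = J * J := by rw [h7, Matrix.one_mul]
                _ = 1 := hJJ
            rw [h5, Matrix.one_mul, hTbUb]
    · show T * (J * Cm.map σ) * Ub * (Tb * (J * Cm) * U) = 1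
      calc T * (J * Cm.map σ) * Ub * (Tb * (J * Cm) * U)
          = T * ((J * Cm.map σ) * ((Ub * Tb) * ((J * Cm) * U))) := by
            simp only [Matrix.mul_assoc]
        _ = T * ((J * Cm.map σ) * ((J * Cm) * U)) := by rw [hUbTb, Matrix.one_mul]
        _ = T * ((J * Cm.map σ * J) * Cm) * U := by simp only [Matrix.mul_assoc]
        _ = 1 := by rw [hNC, Matrix.mul_one, hTU]
  · -- A = B₁ * B₂
    calc A = A * (T * U) := by rw [hTU, Matrix.mul_one]
      _ = (A * T) * U := by rw [Matrix.mul_assoc]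
      _ = T * Cm * U := by rw [hAT]
      _ = T * J * (Ub * Tb) * (J * Cm) * U := by
          rw [hUbTb]
          simp only [Matrix.mul_assoc, Matrix.one_mul]
          rw [← Matrix.mul_assoc J J, hJJ, Matrix.one_mul]
      _ = (T * J * Ub) * (Tb * (J * Cm) * U) := by simp only [Matrix.mul_assoc]
  · -- B̄₁ B₁ = 1
    have hmapB1 : (T * J * Ub).map σ = Tb * J * U := by
      rw [hmapmul, hmapmul, hJmap, hUb, hmap2, hTb]
    rw [hmapB1]
    calc Tb * J * U * (T * J * Ub) = Tb * J * (U * T) * J * Ub := by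
          simp only [Matrix.mul_assoc]
      _ = Tb * (J * J) * Ub := by rw [hUT]; simp only [Matrix.mul_assoc, Matrix.mul_one]
      _ = 1 := by rw [hJJ, Matrix.mul_one, hTbUb]
  · -- B̄₂ B₂ = 1
    have hmapB2 : (Tb * (J * Cm) * U).map σ = T * (J * Cm.map σ) * Ub := by
      rw [hmapmul, hmapmul, hmapmul, hJmap, hTb, hmap2, hUb]
    rw [hmapB2]
    calc T * (J * Cm.map σ) * Ub * (Tb * (J * Cm) * U)
        = T * ((J * Cm.map σ) * ((Ub * Tb) * ((J * Cm) * U))) := by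
          simp only [Matrix.mul_assoc]
      _ = T * ((J * Cm.map σ) * ((J * Cm) * U)) := by rw [hUbTb, Matrix.one_mul]
      _ = T * ((J * Cm.map σ * J) * Cm) * U := by simp only [Matrix.mul_assoc]
      _ = 1 := by rw [hNC, Matrix.mul_one, hTU]
end

section
/- Let A ∈ SL(n,k) have irreducible characteristic polynomial χ_A over k, and let E = k[X]/(χ_A), a field extension of k of degree n. Then A is conjugate to its transpose ᵗA by an element of SL(n,k) if and only if for every T ∈ GL(n,k) with T A T^{-1} = ᵗA, det(T) lies in N_{E/k}(E^×). -/
open Matrix Polynomial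

lemma sum_mulVec {k : Type*} [Field k] {n : ℕ} {α : Type*} (s : Finset α)
    (f : α → Matrix (Fin n) (Fin n) k) (v : Fin n → k) :
    (∑ i ∈ s, f i).mulVec v = ∑ i ∈ s, (f i).mulVec v := by
  classical
  induction s using Finset.induction with
  | empty => simp
  | insert a s h ih => rw [Finset.sum_insert h, Finset.sum_insert h, Matrix.add_mulVec, ih]

lemma mulVec_ext {k : Type*} [Field k] {n : ℕ} {M N : Matrix (Fin n) (Fin n) k}
    (h : ∀ w, M.mulVec w = N.mulVec w) : M = N := by
  have : Matrix.toLin' M = Matrix.toLin' N := by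
    apply LinearMap.ext; intro w; simpa [Matrix.toLin'_apply] using h w
  exact Matrix.toLin'.injective this

lemma charpoly_transpose {R : Type*} [CommRing R] {n : ℕ} (M : Matrix (Fin n) (Fin n) R) :
    Mᵀ.charpoly = M.charpoly := by
  unfold Matrix.charpoly
  rw [← Matrix.det_transpose (charmatrix M)]
  congr 1
  ext i j
  by_cases h : i = j
  · subst h; simp [charmatrix_apply]
  · rw [Matrix.transpose_apply, charmatrix_apply_ne _ _ _ h,
      charmatrix_apply_ne _ _ _ (Ne.symm h), Matrix.transpose_apply]

theorem master {k : Type*} [Field k] {E : Type*} [Field E] [Algebra k E] {n : ℕ}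
    (pb : PowerBasis k E) (B : Matrix (Fin n) (Fin n) k)
    (hdim : pb.dim = n) (hn : 0 < n)
    (hB : aeval B (minpoly k pb.gen) = 0) :
    ∃ (φ : E →ₐ[k] Matrix (Fin n) (Fin n) k) (Θ : E ≃ₗ[k] (Fin n → k)),
      φ pb.gen = B ∧
      (∀ y z, Θ (y * z) = (φ y).mulVec (Θ z)) ∧
      (∀ y, (φ y).det = Algebra.norm k y) ∧
      (∀ S : Matrix (Fin n) (Fin n) k, S * B = B * S → ∃ y, S = φ y) := by
  classical
  haveI : Module.Finite k E := pb.finite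
  set μ := minpoly k pb.gen with hμ
  have hmono : μ.Monic := minpoly.monic pb.isIntegral_gen
  have hμdeg : μ.natDegree = n := by rw [hμ, pb.natDegree_minpoly, hdim]
  have hE : Module.finrank k E = n := by rw [pb.finrank, hdim]
  -- the algebra hom
  set φ : E →ₐ[k] Matrix (Fin n) (Fin n) k := pb.lift B hB with hφ
  have hφgen : φ pb.gen = B := pb.lift_gen B hB
  have hφaeval : ∀ f : k[X], φ (aeval pb.gen f) = aeval B f := fun f => pb.lift_aeval B hB f
  -- φ sends nonzero elements to units
  have hφunit : ∀ y : E, y ≠ 0 → ∃ M, φ y * M = 1 ∧ M * φ y = 1 := by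
    intro y hy
    refine ⟨φ y⁻¹, ?_, ?_⟩ <;>
      rw [← _root_.map_mul] <;> simp [mul_inv_cancel₀ hy, inv_mul_cancel₀ hy]
  -- the vector and the linear map θ
  set v : Fin n → k := fun _ => 1 with hv
  have hv0 : v ≠ 0 := by
    intro h
    have := congrFun h ⟨0, hn⟩
    simp [hv] at this
  set θ : E →ₗ[k] (Fin n → k) :=
    (Module.Basis.constr pb.basis k : _ ≃ₗ[k] _) (fun i => (B ^ (i : ℕ)).mulVec v) with hθ
  have hθpow : ∀ i : Fin pb.dim, θ (pb.gen ^ (i : ℕ)) = (B ^ (i : ℕ)).mulVec v := by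
    intro i
    rw [← pb.basis_eq_pow i, hθ]
    exact Module.Basis.constr_basis pb.basis k _ i
  -- the key evaluation formula
  have star : ∀ f : k[X], θ (aeval pb.gen f) = (aeval B f).mulVec v := by
    intro f
    have haevalμ : aeval pb.gen μ = 0 := by rw [hμ]; exact minpoly.aeval k pb.gen
    have h1 : aeval pb.gen f = aeval pb.gen (f %ₘ μ) := by
      conv_lhs => rw [← Polynomial.modByMonic_add_div f μ]
      simp [haevalμ]
    have h2 : aeval B f = aeval B (f %ₘ μ) := by
      conv_lhs => rw [← Polynomial.modByMonic_add_div f μ]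
      simp [hB]
    have hrdeg : (f %ₘ μ).natDegree < n := by
      rcases eq_or_ne (f %ₘ μ) 0 with h | h
      · simpa [h] using hn
      · have := Polynomial.degree_modByMonic_lt f hmono
        have h2 := Polynomial.natDegree_lt_natDegree h this
        omega
    rw [h1, h2, Polynomial.aeval_eq_sum_range' hrdeg, Polynomial.aeval_eq_sum_range' hrdeg,
      map_sum]
    rw [_root_.sum_mulVec]
    refine Finset.sum_congr rfl fun i hi => ?_
    have hi' : i < pb.dim := by rw [hdim]; exact Finset.mem_range.mp hi
    rw [LinearMap.map_smul, hθpow ⟨i, hi'⟩, Matrix.smul_mulVec]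
  have hθ1 : θ 1 = v := by
    have := star 1
    simpa using this
  have key : ∀ y z, θ (y * z) = (φ y).mulVec (θ z) := by
    intro y z
    obtain ⟨f, rfl⟩ := pb.exists_eq_aeval' y
    obtain ⟨g, rfl⟩ := pb.exists_eq_aeval' z
    have e : aeval pb.gen f * aeval pb.gen g = aeval pb.gen (f * g) :=
      (_root_.map_mul (aeval pb.gen) f g).symm
    rw [e, star, star, hφaeval, _root_.map_mul, ← Matrix.mulVec_mulVec]
  -- θ is injective
  have hinj : Function.Injective θ := by
    rw [injective_iff_map_eq_zero]
    intro y hy0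
    by_contra hy
    obtain ⟨M, hM1, hM2⟩ := hφunit y hy
    have h1 : θ (y * 1) = (φ y).mulVec v := by rw [key, hθ1]
    rw [mul_one, hy0] at h1
    have h2 := congrArg M.mulVec h1
    rw [Matrix.mulVec_mulVec, hM2, Matrix.one_mulVec, Matrix.mulVec_zero] at h2
    exact hv0 h2.symm
  set Θ : E ≃ₗ[k] (Fin n → k) :=
    LinearMap.linearEquivOfInjective θ hinj (by rw [hE, Module.finrank_fin_fun]) with hΘ
  have hΘapp : ∀ z, Θ z = θ z := fun z => rfl
  have keyΘ : ∀ y z, Θ (y * z) = (φ y).mulVec (Θ z) := by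
    intro y z; rw [hΘapp, hΘapp]; exact key y z
  refine ⟨φ, Θ, hφgen, keyΘ, ?_, ?_⟩
  · -- determinant is the norm
    intro y
    have hconj : Matrix.toLin' (φ y) =
        (Θ : E →ₗ[k] (Fin n → k)) ∘ₗ (Algebra.lmul k E y) ∘ₗ (Θ.symm : (Fin n → k) →ₗ[k] E) := by
      apply LinearMap.ext; intro w
      have : w = Θ (Θ.symm w) := (Θ.apply_symm_apply w).symm
      rw [Matrix.toLin'_apply]
      conv_lhs => rw [this]
      rw [← keyΘ y (Θ.symm w)]
      simp [Algebra.lmul]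
    rw [← LinearMap.det_toLin' (φ y), hconj, LinearMap.det_conj, Algebra.norm_apply]
  · -- centralizer
    intro S hS
    have hc : ∀ f : k[X], S * aeval B f = aeval B f * S := by
      intro f
      induction f using Polynomial.induction_on' with
      | add p q hp hq => rw [map_add, mul_add, add_mul, hp, hq]
      | monomial m c =>
        rw [Polynomial.aeval_monomial]
        have hpow : S * B ^ m = B ^ m * S := (Commute.pow_right hS m)
        calc S * (algebraMap k _ c * B ^ m) = algebraMap k _ c * (S * B ^ m) := by
              rw [← mul_assoc, ← Algebra.commutes c S, mul_assoc]
          _ = algebraMap k _ c * B ^ m * S := by rw [hpow, mul_assoc]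
    set y : E := Θ.symm (S.mulVec v) with hy
    have hθy : θ y = S.mulVec v := by rw [← hΘapp]; exact Θ.apply_symm_apply _
    refine ⟨y, mulVec_ext fun w => ?_⟩
    have hw : w = θ (Θ.symm w) := by rw [← hΘapp]; exact (Θ.apply_symm_apply w).symm
    set z : E := Θ.symm w with hz
    obtain ⟨g, hg⟩ := pb.exists_eq_aeval' z
    rw [hw]
    calc S.mulVec (θ z) = S.mulVec ((aeval B g).mulVec v) := by rw [hg, star]
      _ = (S * aeval B g).mulVec v := (Matrix.mulVec_mulVec _ _ _)
      _ = (aeval B g * S).mulVec v := by rw [hc g]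
      _ = (aeval B g).mulVec (S.mulVec v) := (Matrix.mulVec_mulVec _ _ _).symm
      _ = (φ z).mulVec (θ y) := by rw [hθy, hg, hφaeval]
      _ = θ (z * y) := by rw [← key z y]
      _ = θ (y * z) := by rw [mul_comm]
      _ = (φ y).mulVec (θ z) := key y z


/-- Let `A ∈ SL(n,k)` have irreducible characteristic polynomial
`χ_A`, and let `E = k[X]/(χ_A)` (realized as a field extension of `k` of degree `n`
with a root `x` of `χ_A`). Then `A` is conjugate to `ᵗA` by an element of `SL(n,k)`
iff for every `T ∈ GL(n,k)` with `T A T⁻¹ = ᵗA`, `det(T)` is a norm from `E`. -/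
theorem stmt10 {k : Type*} [Field k] {n : ℕ}
    (A : Matrix (Fin n) (Fin n) k) (hA_det : A.det = 1)
    (hirr : Irreducible A.charpoly)
    (E : Type*) [Field E] [Algebra k E]
    (x : E) (hx : Polynomial.aeval x A.charpoly = 0)
    (hdim : Module.finrank k E = n) :
    (∃ C : Matrix (Fin n) (Fin n) k, C.det = 1 ∧ C * A * C⁻¹ = Aᵀ) ↔
    (∀ T : Matrix (Fin n) (Fin n) k, IsUnit T → T * A * T⁻¹ = Aᵀ →
      ∃ y : E, y ≠ 0 ∧ Algebra.norm k y = T.det) := by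
  classical
  set χ := A.charpoly with hχ
  have hmono : χ.Monic := A.charpoly_monic
  have hdeg : χ.natDegree = n := by
    rw [hχ, A.charpoly_natDegree_eq_dim, Fintype.card_fin]
  have hn : 0 < n := by
    rcases Nat.eq_zero_or_pos n with h | h
    · exfalso
      have h1 : χ = 1 := by
        rw [← Polynomial.Monic.natDegree_eq_zero hmono]; omega
      exact hirr.not_isUnit (h1 ▸ isUnit_one)
    · exact h
  haveI : Nonempty (Fin n) := ⟨⟨0, hn⟩⟩
  haveI : FiniteDimensional k E := Module.finite_of_finrank_pos (by omega)
  have hxint : IsIntegral k x := ⟨χ, hmono, hx⟩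
  have hminx : minpoly k x = χ := (minpoly.eq_of_irreducible_of_monic hirr hx hmono).symm
  have htop : IntermediateField.adjoin k {x} = ⊤ := by
    apply IntermediateField.eq_of_le_of_finrank_le le_top
    rw [IntermediateField.finrank_top', IntermediateField.adjoin.finrank hxint,
      hminx, hdeg, hdim]
  set e : (IntermediateField.adjoin k {x}) ≃ₐ[k] E :=
    (IntermediateField.equivOfEq htop).trans IntermediateField.topEquiv with he
  set pb := (IntermediateField.adjoin.powerBasis hxint).map e with hpb
  have hgen : pb.gen = x := by
    rw [hpb, PowerBasis.map_gen, IntermediateField.adjoin.powerBasis_gen]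
    rfl
  have hpbdim : pb.dim = n := by
    rw [hpb, PowerBasis.map_dim, IntermediateField.adjoin.powerBasis_dim, hminx, hdeg]
  have hμA : Polynomial.aeval A (minpoly k pb.gen) = 0 := by
    rw [hgen, hminx]; exact A.aeval_self_charpoly
  have hμT : Polynomial.aeval Aᵀ (minpoly k pb.gen) = 0 := by
    rw [hgen, hminx, hχ, ← _root_.charpoly_transpose A]; exact Aᵀ.aeval_self_charpoly
  obtain ⟨φA, ΘA, hgA, hkA, hdA, hcA⟩ := master pb A hpbdim hn hμA
  obtain ⟨φB, ΘB, hgB, hkB, hdB, hcB⟩ := master pb Aᵀ hpbdim hn hμT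
  constructor
  · rintro ⟨C, hCdet, hC⟩ T hT hTA
    have hCu : IsUnit C.det := by rw [hCdet]; exact isUnit_one
    have hTu : IsUnit T.det := (Matrix.isUnit_iff_isUnit_det T).1 hT
    have hCA : C * A = Aᵀ * C := by
      rw [← hC, Matrix.nonsing_inv_mul_cancel_right _ _ hCu]
    have hTA' : T * A = Aᵀ * T := by
      rw [← hTA, Matrix.nonsing_inv_mul_cancel_right _ _ hTu]
    have hAC : A * C⁻¹ = C⁻¹ * Aᵀ := by
      calc A * C⁻¹ = C⁻¹ * C * A * C⁻¹ := by
            rw [Matrix.nonsing_inv_mul _ hCu, one_mul]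
        _ = C⁻¹ * Aᵀ * C * C⁻¹ := by rw [mul_assoc C⁻¹ C A, hCA, ← mul_assoc]
        _ = C⁻¹ * Aᵀ := by rw [Matrix.mul_nonsing_inv_cancel_right _ _ hCu]
    have hSA : (C⁻¹ * T) * A = A * (C⁻¹ * T) := by
      calc (C⁻¹ * T) * A = C⁻¹ * (T * A) := by rw [mul_assoc]
        _ = C⁻¹ * Aᵀ * T := by rw [hTA', ← mul_assoc]
        _ = A * C⁻¹ * T := by rw [← hAC]
        _ = A * (C⁻¹ * T) := by rw [mul_assoc]
    obtain ⟨y, hySA⟩ := hcA (C⁻¹ * T) hSA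
    have hTCS : T = C * (C⁻¹ * T) := by
      rw [← mul_assoc, Matrix.mul_nonsing_inv _ hCu, one_mul]
    refine ⟨y, ?_, ?_⟩
    · intro h0
      rw [h0, map_zero] at hySA
      have hT0 : T = 0 := by rw [hTCS, hySA, mul_zero]
      exact hT.ne_zero hT0
    · have h1 : (C⁻¹ * T).det = T.det := by
        rw [Matrix.det_mul, Matrix.det_nonsing_inv, hCdet, Ring.inverse_one, one_mul]
      rw [← hdA y, ← hySA, h1]
  · intro h
    set L := (ΘA.symm.trans ΘB) with hL
    set T₀ := LinearMap.toMatrix' (L : (Fin n → k) →ₗ[k] (Fin n → k)) with hT₀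
    have hT₀mul : ∀ w, T₀.mulVec w = ΘB (ΘA.symm w) := by
      intro w
      rw [← Matrix.toLin'_apply, hT₀, Matrix.toLin'_toMatrix']
      rfl
    have hT₀u : IsUnit T₀ := by
      set T' := LinearMap.toMatrix' (L.symm : (Fin n → k) →ₗ[k] (Fin n → k)) with hT'
      have h12 : T₀ * T' = 1 := by
        rw [hT₀, hT', ← LinearMap.toMatrix'_comp]
        have h1 : (L : (Fin n → k) →ₗ[k] (Fin n → k)) ∘ₗ
            (L.symm : (Fin n → k) →ₗ[k] (Fin n → k)) = LinearMap.id := by ext w; simp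
        rw [h1, LinearMap.toMatrix'_id]
      have h21 : T' * T₀ = 1 := by
        rw [hT₀, hT', ← LinearMap.toMatrix'_comp]
        have h1 : (L.symm : (Fin n → k) →ₗ[k] (Fin n → k)) ∘ₗ
            (L : (Fin n → k) →ₗ[k] (Fin n → k)) = LinearMap.id := by ext w; simp
        rw [h1, LinearMap.toMatrix'_id]
      exact ⟨⟨T₀, T', h12, h21⟩, rfl⟩
    have hcomm : T₀ * A = Aᵀ * T₀ := by
      apply mulVec_ext; intro w
      have hw : w = ΘA (ΘA.symm w) := (ΘA.apply_symm_apply w).symm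
      calc (T₀ * A).mulVec w = T₀.mulVec (A.mulVec (ΘA (ΘA.symm w))) := by
            rw [← Matrix.mulVec_mulVec, ← hw]
        _ = T₀.mulVec (ΘA (pb.gen * ΘA.symm w)) := by rw [hkA, hgA]
        _ = ΘB (pb.gen * ΘA.symm w) := by rw [hT₀mul, ΘA.symm_apply_apply]
        _ = Aᵀ.mulVec (ΘB (ΘA.symm w)) := by rw [hkB, hgB]
        _ = Aᵀ.mulVec (T₀.mulVec w) := by rw [hT₀mul]
        _ = (Aᵀ * T₀).mulVec w := Matrix.mulVec_mulVec _ _ _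
    have hT₀du : IsUnit T₀.det := (Matrix.isUnit_iff_isUnit_det T₀).1 hT₀u
    have hconj : T₀ * A * T₀⁻¹ = Aᵀ := by
      rw [hcomm, Matrix.mul_nonsing_inv_cancel_right _ _ hT₀du]
    obtain ⟨y, hy0, hyn⟩ := h T₀ hT₀u hconj
    have hCdet : (T₀ * φA y⁻¹).det = 1 := by
      rw [Matrix.det_mul, hdA, ← hyn, ← _root_.map_mul, mul_inv_cancel₀ hy0, _root_.map_one]
    refine ⟨T₀ * φA y⁻¹, hCdet, ?_⟩
    have hAφ : φA y⁻¹ * A = A * φA y⁻¹ := by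
      rw [← hgA, ← _root_.map_mul φA, mul_comm, _root_.map_mul φA]
    have hCA : (T₀ * φA y⁻¹) * A = Aᵀ * (T₀ * φA y⁻¹) := by
      calc (T₀ * φA y⁻¹) * A = T₀ * (φA y⁻¹ * A) := by rw [mul_assoc]
        _ = T₀ * (A * φA y⁻¹) := by rw [hAφ]
        _ = T₀ * A * φA y⁻¹ := by rw [mul_assoc]
        _ = Aᵀ * T₀ * φA y⁻¹ := by rw [hcomm]
        _ = Aᵀ * (T₀ * φA y⁻¹) := by rw [mul_assoc]
    rw [hCA, Matrix.mul_nonsing_inv_cancel_right _ _ (by rw [hCdet]; exact isUnit_one)]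
end

section
/- Let A ∈ SL(3,k) have irreducible characteristic polynomial χ_A over k, and let E = k[X]/(χ_A), a cubic field extension of k. If every element of k^× is a norm from E, i.e., k^× = N_{E/k}(E^×), then A is conjugate to its transpose ᵗA by an element of SL(3,k). -/
open Matrix Polynomial

lemma charpoly_transpose' {k : Type*} [Field k] (A : Matrix (Fin 3) (Fin 3) k) :
    Aᵀ.charpoly = A.charpoly := by
  unfold Matrix.charpoly
  have : charmatrix Aᵀ = (charmatrix A)ᵀ := by
    refine Matrix.ext fun i j => ?_
    by_cases h : i = j
    · subst h; simp [charmatrix_apply_eq, Matrix.transpose_apply]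
    · rw [Matrix.transpose_apply, charmatrix_apply_ne _ _ _ h,
        charmatrix_apply_ne _ _ _ (Ne.symm h), Matrix.transpose_apply]
  rw [this, Matrix.det_transpose]

/-- Let `A ∈ SL(3,k)` have irreducible characteristic polynomial
`χ_A`, and let `E = k[X]/(χ_A)` (realized as a cubic field extension of `k` with a
root `x` of `χ_A`). If every element of `k^×` is a norm from `E`, then `A` is
conjugate to `ᵗA` by an element of `SL(3,k)`. -/
theorem stmt11 {k : Type*} [Field k]
    (A : Matrix (Fin 3) (Fin 3) k) (hA_det : A.det = 1)
    (hirr : Irreducible A.charpoly)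
    (E : Type*) [Field E] [Algebra k E]
    (x : E) (hx : Polynomial.aeval x A.charpoly = 0)
    (hdim : Module.finrank k E = 3)
    (hnorm : ∀ c : k, c ≠ 0 → ∃ y : E, y ≠ 0 ∧ Algebra.norm k y = c) :
    ∃ C : Matrix (Fin 3) (Fin 3) k, C.det = 1 ∧ C * A * C⁻¹ = Aᵀ := by
  classical
  haveI : Fact (Irreducible A.charpoly) := ⟨hirr⟩
  have hχne : A.charpoly ≠ 0 := hirr.ne_zero
  haveI : FiniteDimensional k E := FiniteDimensional.of_finrank_eq_succ hdim
  have hAroot : Polynomial.aeval A A.charpoly = 0 := Matrix.aeval_self_charpoly A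
  have hATroot : Polynomial.aeval Aᵀ A.charpoly = 0 := by
    rw [← charpoly_transpose' A]; exact Matrix.aeval_self_charpoly Aᵀ
  -- the algebra isomorphism AdjoinRoot χ ≃ₐ E
  set φE : AdjoinRoot A.charpoly →ₐ[k] E := AdjoinRoot.liftAlgHom A.charpoly (Algebra.ofId k E) x hx with hφE
  have hinj : Function.Injective φE := φE.toRingHom.injective
  haveI : FiniteDimensional k (AdjoinRoot A.charpoly) :=
    PowerBasis.finite (AdjoinRoot.powerBasis hχne)
  have hfr : Module.finrank k (AdjoinRoot A.charpoly) = Module.finrank k E := by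
    rw [(AdjoinRoot.powerBasis hχne).finrank, hdim]
    simp [AdjoinRoot.powerBasis]
  have hsurj : Function.Surjective φE :=
    (LinearMap.injective_iff_surjective_of_finrank_eq_finrank
      (f := φE.toLinearMap) hfr).mp hinj
  let ψ : AdjoinRoot A.charpoly ≃ₐ[k] E := AlgEquiv.ofBijective φE ⟨hinj, hsurj⟩
  have hψroot : ψ (AdjoinRoot.root A.charpoly) = x := by
    show φE (AdjoinRoot.root A.charpoly) = x
    exact AdjoinRoot.liftAlgHom_root _ _ _ _
  have hψsymm : ψ.symm x = AdjoinRoot.root A.charpoly := by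
    rw [← hψroot, AlgEquiv.symm_apply_apply]
  -- the two algebra homs E →ₐ Matrix
  have hkerA : ∀ p ∈ Ideal.span {A.charpoly}, Polynomial.aeval A p = 0 := by
    intro p hp
    rw [Ideal.mem_span_singleton] at hp
    obtain ⟨q, rfl⟩ := hp
    rw [_root_.map_mul, hAroot, zero_mul]
  have hkerAT : ∀ p ∈ Ideal.span {A.charpoly}, Polynomial.aeval Aᵀ p = 0 := by
    intro p hp
    rw [Ideal.mem_span_singleton] at hp
    obtain ⟨q, rfl⟩ := hp
    rw [_root_.map_mul, hATroot, zero_mul]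
  let liftA : AdjoinRoot A.charpoly →ₐ[k] Matrix (Fin 3) (Fin 3) k :=
    Ideal.Quotient.liftₐ (Ideal.span {A.charpoly}) (Polynomial.aeval A) hkerA
  let liftAT : AdjoinRoot A.charpoly →ₐ[k] Matrix (Fin 3) (Fin 3) k :=
    Ideal.Quotient.liftₐ (Ideal.span {A.charpoly}) (Polynomial.aeval Aᵀ) hkerAT
  have liftA_root : liftA (AdjoinRoot.root A.charpoly) = A := by
    have h1 : liftA (AdjoinRoot.root A.charpoly) = Polynomial.aeval A (X : k[X]) :=
      Ideal.Quotient.lift_mk _ _ _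
    rw [h1, Polynomial.aeval_X]
  have liftAT_root : liftAT (AdjoinRoot.root A.charpoly) = Aᵀ := by
    have h1 : liftAT (AdjoinRoot.root A.charpoly) = Polynomial.aeval Aᵀ (X : k[X]) :=
      Ideal.Quotient.lift_mk _ _ _
    rw [h1, Polynomial.aeval_X]
  let φ : E →ₐ[k] Matrix (Fin 3) (Fin 3) k := liftA.comp ψ.symm.toAlgHom
  let φT : E →ₐ[k] Matrix (Fin 3) (Fin 3) k := liftAT.comp ψ.symm.toAlgHom
  have hφx : φ x = A := by
    have h1 : φ x = liftA (ψ.symm x) := rfl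
    rw [h1, hψsymm, liftA_root]
  have hφTx : φT x = Aᵀ := by
    have h1 : φT x = liftAT (ψ.symm x) := rfl
    rw [h1, hψsymm, liftAT_root]
  -- realize k^3 as a 1-dim E-space via a nonzero vector
  have hrk3 : Module.finrank k (Fin 3 → k) = 3 := Module.finrank_fin_fun k
  let v : Fin 3 → k := Pi.single 0 1
  have hv : v ≠ 0 := by
    intro h
    have := congrFun h 0
    simp [v] at this
  have key : ∀ (φ' : E →ₐ[k] Matrix (Fin 3) (Fin 3) k),
      ∃ e : E ≃ₗ[k] (Fin 3 → k), ∀ z : E, e z = (φ' z).mulVec v := by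
    intro φ'
    let eL : E →ₗ[k] (Fin 3 → k) :=
      { toFun := fun z => (φ' z).mulVec v
        map_add' := fun a b => by simp [_root_.map_add, Matrix.add_mulVec]
        map_smul' := fun c a => by
          show (φ' (c • a)).mulVec v = (RingHom.id k c) • (φ' a).mulVec v
          rw [_root_.map_smul, RingHom.id_apply, Matrix.smul_mulVec] }
    have heinj : Function.Injective eL := by
      rw [← LinearMap.ker_eq_bot, LinearMap.ker_eq_bot']
      intro z hz
      by_contra hzne
      have h1 : (φ' z⁻¹).mulVec ((φ' z).mulVec v) = v := by
        rw [Matrix.mulVec_mulVec, ← _root_.map_mul, inv_mul_cancel₀ hzne, _root_.map_one,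
          Matrix.one_mulVec]
      rw [show (φ' z).mulVec v = 0 from hz, Matrix.mulVec_zero] at h1
      exact hv h1.symm
    have hesurj : Function.Surjective eL :=
      (LinearMap.injective_iff_surjective_of_finrank_eq_finrank
        (by rw [hdim, hrk3])).mp heinj
    exact ⟨LinearEquiv.ofBijective eL ⟨heinj, hesurj⟩, fun z => rfl⟩
  obtain ⟨e, he⟩ := key φ
  obtain ⟨eT, heT⟩ := key φT
  have heA : ∀ z : E, A.mulVec (e z) = e (x * z) := by
    intro z
    rw [he, he, _root_.map_mul, hφx, ← Matrix.mulVec_mulVec]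
  have heTA : ∀ z : E, Aᵀ.mulVec (eT z) = eT (x * z) := by
    intro z
    rw [heT, heT, _root_.map_mul, hφTx, ← Matrix.mulVec_mulVec]
  -- the base intertwiner and its determinant
  let C₀ : (Fin 3 → k) ≃ₗ[k] (Fin 3 → k) := e.symm.trans eT
  have hdC₀ : IsUnit (LinearMap.det (C₀ : (Fin 3 → k) →ₗ[k] (Fin 3 → k))) :=
    LinearEquiv.isUnit_det' C₀
  have hdC₀ne : LinearMap.det (C₀ : (Fin 3 → k) →ₗ[k] (Fin 3 → k)) ≠ 0 := hdC₀.ne_zero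
  obtain ⟨y, hyne, hynorm⟩ :=
    hnorm (LinearMap.det (C₀ : (Fin 3 → k) →ₗ[k] (Fin 3 → k)))⁻¹ (inv_ne_zero hdC₀ne)
  -- the corrected intertwiner
  let L : (Fin 3 → k) →ₗ[k] (Fin 3 → k) :=
    (eT : E →ₗ[k] (Fin 3 → k)) ∘ₗ (Algebra.lmul k E y) ∘ₗ (e.symm : (Fin 3 → k) →ₗ[k] E)
  have hL : ∀ u, L u = eT (y * e.symm u) := fun u => rfl
  have hLA : ∀ u, L (A.mulVec u) = Aᵀ.mulVec (L u) := by
    intro u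
    have h1 : A.mulVec u = e (x * e.symm u) := by
      rw [← heA, LinearEquiv.apply_symm_apply]
    rw [h1, hL, hL, LinearEquiv.symm_apply_apply, heTA]
    ring_nf
  -- determinant of L
  have hdetL : LinearMap.det L = 1 := by
    have hsplit : L = ((eT : E →ₗ[k] (Fin 3 → k)) ∘ₗ (Algebra.lmul k E y) ∘ₗ
        (eT.symm : (Fin 3 → k) →ₗ[k] E)) ∘ₗ (C₀ : (Fin 3 → k) →ₗ[k] (Fin 3 → k)) := by
      apply LinearMap.ext
      intro u
      simp [L, C₀, LinearMap.comp_apply]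
    rw [hsplit, LinearMap.det_comp, LinearMap.det_conj (Algebra.lmul k E y) eT,
      ← Algebra.norm_apply, hynorm, inv_mul_cancel₀ hdC₀ne]
  -- convert to matrices
  refine ⟨LinearMap.toMatrix' L, ?_, ?_⟩
  · rw [← LinearMap.det_toMatrix' L] at hdetL
    exact hdetL
  · have hCmul : ∀ u, (LinearMap.toMatrix' L).mulVec u = L u := by
      intro u
      rw [← Matrix.toLin'_apply, Matrix.toLin'_toMatrix']
    have hCA : (LinearMap.toMatrix' L) * A = Aᵀ * (LinearMap.toMatrix' L) := by
      ext i j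
      have h := congrFun (by
        rw [← Matrix.mulVec_mulVec, hCmul, hLA, ← hCmul, Matrix.mulVec_mulVec] :
        ((LinearMap.toMatrix' L) * A).mulVec (Pi.single j 1)
          = (Aᵀ * (LinearMap.toMatrix' L)).mulVec (Pi.single j 1)) i
      simpa [Matrix.mulVec_single] using h
    have hdC : (LinearMap.toMatrix' L).det = 1 := by
      rw [LinearMap.det_toMatrix'] at *
      exact hdetL
    have hCinv : (LinearMap.toMatrix' L) * (LinearMap.toMatrix' L)⁻¹ = 1 :=
      Matrix.mul_nonsing_inv _ (by rw [hdC]; exact isUnit_one)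
    calc (LinearMap.toMatrix' L) * A * (LinearMap.toMatrix' L)⁻¹
        = Aᵀ * (LinearMap.toMatrix' L) * (LinearMap.toMatrix' L)⁻¹ := by rw [hCA]
      _ = Aᵀ * ((LinearMap.toMatrix' L) * (LinearMap.toMatrix' L)⁻¹) := by
          rw [Matrix.mul_assoc]
      _ = Aᵀ := by rw [hCinv, Matrix.mul_one]
end

section
/- Let A ∈ SL(n,k) have irreducible characteristic polynomial over k. Then A is conjugate to its transpose ᵗA by an element of SL(n,k) if and only if A is a product of two symmetric matrices belonging to SL(n,k). -/
open Matrix Polynomial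

set_option maxHeartbeats 1600000 in
private lemma aux_key {k : Type*} [Field k] {n : ℕ} (A : Matrix (Fin n) (Fin n) k)
    (hirr : Irreducible A.charpoly) :
    ∃ S : Matrix (Fin n) (Fin n) k, Sᵀ = S ∧ S.det ≠ 0 ∧ Aᵀ * S = S * A ∧
      ∀ D : Matrix (Fin n) (Fin n) k, D * A = A * D →
        ∃ g : Polynomial k, D = aeval A g := by
  classical
  have hn : 0 < n := by
    rcases Nat.eq_zero_or_pos n with h | h
    · exfalso
      subst h
      have hmono := A.charpoly_monic
      have hdeg : A.charpoly.natDegree = 0 := by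
        rw [Matrix.charpoly_natDegree_eq_dim]; simp
      have h1 : A.charpoly = 1 := hmono.natDegree_eq_zero.mp hdeg
      exact hirr.not_isUnit (h1 ▸ isUnit_one)
    · exact h
  have hf0 : A.charpoly ≠ 0 := hirr.ne_zero
  haveI : Fact (Irreducible A.charpoly) := ⟨hirr⟩
  let K := AdjoinRoot A.charpoly
  have hker : ∀ p : Polynomial k, p ∈ Ideal.span {A.charpoly} →
      aeval A p = 0 := by
    intro p hp
    rw [Ideal.mem_span_singleton] at hp
    obtain ⟨q, rfl⟩ := hp
    rw [_root_.map_mul, A.aeval_self_charpoly, zero_mul]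
  let ψ : K →ₐ[k] Matrix (Fin n) (Fin n) k :=
    Ideal.Quotient.liftₐ (Ideal.span {A.charpoly}) (aeval A) hker
  have hψmk : ∀ g : Polynomial k, ψ (AdjoinRoot.mk A.charpoly g) = aeval A g :=
    fun g => rfl
  have hψroot : ψ (AdjoinRoot.root A.charpoly) = A := by
    rw [show AdjoinRoot.root A.charpoly = AdjoinRoot.mk A.charpoly X from rfl,
      hψmk, aeval_X]
  let i0 : Fin n := ⟨0, hn⟩
  let v : Fin n → k := Pi.single i0 1
  have hv : v i0 = 1 := Pi.single_eq_same i0 1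
  let θ : K →ₗ[k] (Fin n → k) :=
    { toFun := fun c => ψ c *ᵥ v
      map_add' := fun a b => by
        show ψ (a + b) *ᵥ v = ψ a *ᵥ v + ψ b *ᵥ v
        rw [_root_.map_add, Matrix.add_mulVec]
      map_smul' := fun a b => by
        show ψ (a • b) *ᵥ v = a • (ψ b *ᵥ v)
        rw [_root_.map_smul, Matrix.smul_mulVec] }
  have hθmul : ∀ c d : K, θ (c * d) = ψ c *ᵥ θ d := by
    intro c d
    show ψ (c * d) *ᵥ v = ψ c *ᵥ (ψ d *ᵥ v)
    rw [_root_.map_mul, ← Matrix.mulVec_mulVec]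
  have hθ1 : θ 1 = v := by
    show ψ 1 *ᵥ v = v
    rw [_root_.map_one, Matrix.one_mulVec]
  have hinj : Function.Injective θ := by
    rw [← LinearMap.ker_eq_bot, LinearMap.ker_eq_bot']
    intro c hc
    by_contra hc0
    have h1 : θ (c⁻¹ * c) = 0 := by
      rw [hθmul, hc, Matrix.mulVec_zero]
    rw [inv_mul_cancel₀ hc0, hθ1] at h1
    have h2 := congrFun h1 i0
    rw [hv] at h2
    exact one_ne_zero h2
  haveI : Module.Finite k K := (AdjoinRoot.powerBasis hf0).finite
  have hrank : Module.finrank k K = Module.finrank k (Fin n → k) := by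
    rw [(AdjoinRoot.powerBasis hf0).finrank, AdjoinRoot.powerBasis_dim,
      Module.finrank_fin_fun, Matrix.charpoly_natDegree_eq_dim, Fintype.card_fin]
  let e : K ≃ₗ[k] (Fin n → k) := LinearMap.linearEquivOfInjective θ hinj hrank
  have he : ∀ c, e c = ψ c *ᵥ v := fun c =>
    LinearMap.linearEquivOfInjective_apply hinj hrank c
  have hmul' : ∀ c d : K, e (c * d) = ψ c *ᵥ e d := by
    intro c d
    rw [he, he, _root_.map_mul, ← Matrix.mulVec_mulVec]
  have hsymm : ∀ (c : K) (w : Fin n → k), e.symm (ψ c *ᵥ w) = c * e.symm w := by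
    intro c w
    apply e.injective
    rw [e.apply_symm_apply, hmul', e.apply_symm_apply]
  -- the functional
  let lam : K →ₗ[k] k := (LinearMap.proj i0).comp (e : K →ₗ[k] (Fin n → k))
  have hlam1 : lam 1 = 1 := by
    show e 1 i0 = 1
    rw [show e 1 = v by rw [he, _root_.map_one, Matrix.one_mulVec], hv]
  -- the "basis" vectors in K
  let b : Fin n → K := fun i => e.symm (Pi.single i 1)
  have hsum : ∀ w : Fin n → k, e.symm w = ∑ i, w i • b i := by
    intro w
    have hw : w = ∑ i, w i • (Pi.single i 1 : Fin n → k) := by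
      ext j
      rw [Finset.sum_apply]
      simp [Pi.single_apply]
    conv_lhs => rw [hw]
    rw [_root_.map_sum]
    simp only [_root_.map_smul]
    rfl
  have hAe : ∀ i : Fin n, e.symm (A *ᵥ Pi.single i 1) =
      AdjoinRoot.root A.charpoly * b i := by
    intro i
    have h := hsymm (AdjoinRoot.root A.charpoly) (Pi.single i 1)
    rw [hψroot] at h
    exact h
  -- the symmetric matrix
  let S : Matrix (Fin n) (Fin n) k := Matrix.of fun i j => lam (b i * b j)
  have hSentry : ∀ i j, S i j = lam (b i * b j) := fun i j => rfl
  have hSsym : Sᵀ = S := by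
    ext i j
    rw [Matrix.transpose_apply, hSentry, hSentry, mul_comm]
  -- key half-computation
  have hmulS : ∀ (w : Fin n → k) (j : Fin n),
      ∑ l, w l * lam (b l * b j) = lam (e.symm w * b j) := by
    intro w j
    rw [hsum, Finset.sum_mul, _root_.map_sum]
    congr 1
    ext l
    rw [smul_mul_assoc, _root_.map_smul, smul_eq_mul]
  have hSA : Aᵀ * S = S * A := by
    ext i j
    rw [Matrix.mul_apply, Matrix.mul_apply]
    calc ∑ l, Aᵀ i l * S l j
        = ∑ l, (A *ᵥ Pi.single i 1) l * lam (b l * b j) := by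
          apply Finset.sum_congr rfl
          intro l _
          simp only [Matrix.mulVec_single_one, Matrix.col_apply, mul_one, Matrix.transpose_apply, hSentry]
      _ = lam (e.symm (A *ᵥ Pi.single i 1) * b j) := hmulS _ _
      _ = lam (AdjoinRoot.root A.charpoly * b i * b j) := by rw [hAe]
      _ = lam (AdjoinRoot.root A.charpoly * b j * b i) := by
          congr 1; ring
      _ = lam (e.symm (A *ᵥ Pi.single j 1) * b i) := by rw [hAe]
      _ = ∑ l, (A *ᵥ Pi.single j 1) l * lam (b l * b i) := (hmulS _ _).symm
      _ = ∑ l, S i l * A l j := by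
          apply Finset.sum_congr rfl
          intro l _
          simp only [Matrix.mulVec_single_one, Matrix.col_apply, mul_one, hSentry]
          rw [mul_comm (b i) (b l)]
          exact mul_comm _ _
  -- invertibility
  have hSdet : S.det ≠ 0 := by
    intro hdet
    obtain ⟨w, hw0, hw⟩ := Matrix.exists_mulVec_eq_zero_iff.mpr hdet
    set x : K := e.symm w with hx
    have hx0 : x ≠ 0 := by
      intro h0
      apply hw0
      have : w = e x := (e.apply_symm_apply w).symm
      rw [this, h0, _root_.map_zero]
    have hbx : ∀ i, lam (b i * x) = 0 := by
      intro i
      have h1 := congrFun hw i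
      rw [Matrix.mulVec, dotProduct] at h1
      calc lam (b i * x)
          = lam (x * b i) := by rw [mul_comm]
        _ = ∑ l, w l * lam (b l * b i) := (hmulS w i).symm
        _ = ∑ l, S i l * w l := by
            apply Finset.sum_congr rfl
            intro l _
            simp only [hSentry]
            rw [mul_comm (b i) (b l)]
            exact mul_comm _ _
        _ = 0 := h1
    have hcx : ∀ c : K, lam (c * x) = 0 := by
      intro c
      have hc : c = ∑ i, (e c) i • b i := by
        rw [← hsum, e.symm_apply_apply]
      calc lam (c * x) = lam ((∑ i, (e c) i • b i) * x) := by rw [← hc]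
        _ = ∑ i, (e c) i • lam (b i * x) := by
            rw [Finset.sum_mul, _root_.map_sum]
            apply Finset.sum_congr rfl
            intro i _
            rw [smul_mul_assoc, _root_.map_smul]
        _ = 0 := by simp [hbx]
    have := hcx x⁻¹
    rw [inv_mul_cancel₀ hx0, hlam1] at this
    exact one_ne_zero this
  -- centralizer
  refine ⟨S, hSsym, hSdet, hSA, ?_⟩
  intro D hD
  have hDpoly : ∀ g : Polynomial k, D * aeval A g = aeval A g * D := by
    intro g
    induction g using Polynomial.induction_on' with
    | add p q hp hq => rw [_root_.map_add, mul_add, add_mul, hp, hq]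
    | monomial i a =>
        rw [← smul_X_eq_monomial, _root_.map_smul, aeval_X_pow, mul_smul_comm,
          smul_mul_assoc]
        congr 1
        have hDA : Commute D A := hD
        exact hDA.pow_right i
  have hDψ : ∀ c : K, D * ψ c = ψ c * D := by
    intro c
    obtain ⟨g, rfl⟩ := AdjoinRoot.mk_surjective c
    rw [hψmk]
    exact hDpoly g
  set c : K := e.symm (D *ᵥ v) with hc
  have hDw : ∀ w : Fin n → k, D *ᵥ w = ψ c *ᵥ w := by
    intro w
    have hw : w = e (e.symm w) := (e.apply_symm_apply w).symm
    set d : K := e.symm w with hd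
    rw [hw]
    calc D *ᵥ e d = D *ᵥ (ψ d *ᵥ v) := by rw [he]
      _ = (D * ψ d) *ᵥ v := by rw [Matrix.mulVec_mulVec]
      _ = (ψ d * D) *ᵥ v := by rw [hDψ]
      _ = ψ d *ᵥ (D *ᵥ v) := by rw [← Matrix.mulVec_mulVec]
      _ = ψ d *ᵥ e c := by rw [hc, e.apply_symm_apply]
      _ = e (d * c) := (hmul' d c).symm
      _ = e (c * d) := by rw [mul_comm]
      _ = ψ c *ᵥ e d := hmul' c d
  have hDeq : D = ψ c := by
    ext i j
    have h1 := congrFun (hDw (Pi.single j 1)) i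
    simp only [Matrix.mulVec_single_one, Matrix.col_apply, mul_one] at h1
    exact h1
  obtain ⟨g, hg⟩ := AdjoinRoot.mk_surjective c
  exact ⟨g, by rw [hDeq, ← hg, hψmk]⟩

/-- Let `A ∈ SL(n,k)` have irreducible characteristic polynomial over
`k`. Then `A` is conjugate to `ᵗA` by an element of `SL(n,k)` iff `A` is a product
of two symmetric matrices belonging to `SL(n,k)`. -/
theorem stmt12 {k : Type*} [Field k] {n : ℕ}
    (A : Matrix (Fin n) (Fin n) k) (hA_det : A.det = 1)
    (hirr : Irreducible A.charpoly) :
    (∃ C : Matrix (Fin n) (Fin n) k, C.det = 1 ∧ C * A * C⁻¹ = Aᵀ) ↔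
    (∃ S₁ S₂ : Matrix (Fin n) (Fin n) k,
      S₁ᵀ = S₁ ∧ S₂ᵀ = S₂ ∧ S₁.det = 1 ∧ S₂.det = 1 ∧ A = S₁ * S₂) := by
  constructor
  · rintro ⟨C, hCdet, hconj⟩
    obtain ⟨S, hSsym, hSdet, hSA, hcent⟩ := aux_key A hirr
    have hCu : IsUnit C.det := by rw [hCdet]; exact isUnit_one
    have hCC : C⁻¹ * C = 1 := Matrix.nonsing_inv_mul C hCu
    have hCC' : C * C⁻¹ = 1 := Matrix.mul_nonsing_inv C hCu
    have hSu : IsUnit S.det := isUnit_iff_ne_zero.mpr hSdet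
    have hSS : S⁻¹ * S = 1 := Matrix.nonsing_inv_mul S hSu
    have hSS' : S * S⁻¹ = 1 := Matrix.mul_nonsing_inv S hSu
    have hCA : C * A = Aᵀ * C := by
      calc C * A = C * A * C⁻¹ * C := by rw [mul_assoc (C * A), hCC, mul_one]
        _ = Aᵀ * C := by rw [hconj]
    have hAS : A * S⁻¹ = S⁻¹ * Aᵀ := by
      calc A * S⁻¹ = S⁻¹ * (S * A) * S⁻¹ := by
            rw [← mul_assoc, hSS, one_mul]
        _ = S⁻¹ * (Aᵀ * S) * S⁻¹ := by rw [hSA]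
        _ = S⁻¹ * Aᵀ * (S * S⁻¹) := by rw [← mul_assoc, mul_assoc (S⁻¹ * Aᵀ)]
        _ = S⁻¹ * Aᵀ := by rw [hSS', mul_one]
    have hD : (S⁻¹ * C) * A = A * (S⁻¹ * C) := by
      calc S⁻¹ * C * A = S⁻¹ * (Aᵀ * C) := by rw [mul_assoc, hCA]
        _ = S⁻¹ * Aᵀ * C := by rw [mul_assoc]
        _ = A * S⁻¹ * C := by rw [← hAS]
        _ = A * (S⁻¹ * C) := by rw [mul_assoc]
    obtain ⟨g, hg⟩ := hcent _ hD
    have hC : C = S * aeval A g := by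
      rw [← hg, ← mul_assoc, hSS', one_mul]
    -- powers intertwine
    have hpow : ∀ i : ℕ, (Aᵀ) ^ i * S = S * A ^ i := by
      intro i
      induction i with
      | zero => rw [pow_zero, pow_zero, one_mul, mul_one]
      | succ m ih =>
          calc (Aᵀ) ^ (m + 1) * S = (Aᵀ) ^ m * (Aᵀ * S) := by
                rw [pow_succ, mul_assoc]
            _ = (Aᵀ) ^ m * S * A := by rw [hSA, mul_assoc]
            _ = S * A ^ m * A := by rw [ih]
            _ = S * A ^ (m + 1) := by rw [pow_succ, mul_assoc]
    have htrans : ∀ p : Polynomial k, (aeval A p)ᵀ * S = S * aeval A p := by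
      intro p
      induction p using Polynomial.induction_on' with
      | add p q hp hq => rw [_root_.map_add, Matrix.transpose_add, add_mul, mul_add, hp, hq]
      | monomial i a =>
          rw [← smul_X_eq_monomial, _root_.map_smul, aeval_X_pow, Matrix.transpose_smul,
            smul_mul_assoc, mul_smul_comm, Matrix.transpose_pow, hpow]
    have hCsym : Cᵀ = C := by
      rw [hC, Matrix.transpose_mul, hSsym, htrans]
    refine ⟨C⁻¹, C * A, ?_, ?_, ?_, ?_, ?_⟩
    · rw [Matrix.transpose_nonsing_inv, hCsym]
    · rw [Matrix.transpose_mul, hCsym, ← hCA]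
    · rw [Matrix.det_nonsing_inv, hCdet, Ring.inverse_one]
    · rw [Matrix.det_mul, hCdet, hA_det, one_mul]
    · rw [← mul_assoc, hCC, one_mul]
  · rintro ⟨S₁, S₂, h1, h2, hd1, hd2, hA⟩
    refine ⟨S₂, hd2, ?_⟩
    have hS2u : IsUnit S₂.det := by rw [hd2]; exact isUnit_one
    have hSS' : S₂ * S₂⁻¹ = 1 := Matrix.mul_nonsing_inv S₂ hS2u
    have hAT : Aᵀ = S₂ * S₁ := by rw [hA, Matrix.transpose_mul, h1, h2]
    rw [hAT, hA, ← mul_assoc, mul_assoc (S₂ * S₁), hSS', mul_one]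
end

section
/- Let S be a symmetric matrix in SL(3,k) whose characteristic polynomial p(X) is irreducible over k, and let E = k[X]/(p(X)), the degree three field extension of k determined by p(X). Suppose k^×/N_{E/k}(E^×) is nontrivial, i.e., there exists c ∈ k^× with c ∉ N_{E/k}(E^×). Then there exists a matrix A ∈ SL(3,k) with characteristic polynomial p(X) which is not a product of two symmetric matrices belonging to SL(3,k). -/
open Matrix Polynomial

section aux
variable {k : Type*} [Field k]

lemma my_cubic_expansion {p : k[X]} (hm : p.Monic) (hd : p.natDegree = 3) :
    p = X^3 + C (p.coeff 2) * X^2 + C (p.coeff 1) * X + C (p.coeff 0) := by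
  have h3 : p.coeff 3 = 1 := by rw [← hd]; exact hm.coeff_natDegree
  ext n
  rcases n with _|_|_|_|n <;>
    simp [coeff_add, coeff_X_pow, coeff_C, h3, coeff_C_mul, Nat.succ_ne_zero]
  exact coeff_eq_zero_of_natDegree_lt (by omega)

lemma my_companion_charpoly (c₀ c₁ c₂ : k) :
    (!![0,0,-c₀; 1,0,-c₁; 0,1,-c₂] : Matrix (Fin 3) (Fin 3) k).charpoly
      = X^3 + C c₂ * X^2 + C c₁ * X + C c₀ := by
  rw [Matrix.charpoly, Matrix.det_fin_three]
  simp [charmatrix_apply, Matrix.diagonal]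
  ring

lemma my_companion_det (c₀ c₁ c₂ : k) :
    (!![0,0,-c₀; 1,0,-c₁; 0,1,-c₂] : Matrix (Fin 3) (Fin 3) k).det = -c₀ := by
  rw [Matrix.det_fin_three]; simp [Matrix.vecHead, Matrix.vecTail]

lemma my_companion_transpose (c₀ c₁ c₂ : k) :
    (!![0,0,-c₀; 1,0,-c₁; 0,1,-c₂] : Matrix (Fin 3) (Fin 3) k)ᵀ
      = !![0,1,0; 0,0,1; -c₀,-c₁,-c₂] := by
  ext i j; fin_cases i <;> fin_cases j <;> rfl

lemma my_intertwine (c₀ c₁ c₂ : k) :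
    (!![0,0,-c₀; 1,0,-c₁; 0,1,-c₂] : Matrix (Fin 3) (Fin 3) k) * !![c₁,c₂,1; c₂,1,0; 1,0,0]
    = !![c₁,c₂,1; c₂,1,0; 1,0,0] * !![0,1,0; 0,0,1; -c₀,-c₁,-c₂] := by
  ext i j
  fin_cases i <;> fin_cases j <;>
    (simp [Matrix.mul_apply, Fin.sum_univ_three, Matrix.vecHead, Matrix.vecTail]; try ring)

lemma my_Tdet (c₀ c₁ c₂ : k) :
    (!![c₁,c₂,1; c₂,1,0; 1,0,0] : Matrix (Fin 3) (Fin 3) k).det = -1 := by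
  rw [Matrix.det_fin_three]; simp [Matrix.vecHead, Matrix.vecTail]

lemma my_commutant (c₀ c₁ c₂ : k) (W : Matrix (Fin 3) (Fin 3) k)
    (h : !![0,0,-c₀; 1,0,-c₁; 0,1,-c₂] * W = W * !![0,0,-c₀; 1,0,-c₁; 0,1,-c₂]) :
    W = W 0 0 • (1 : Matrix (Fin 3) (Fin 3) k)
        + W 1 0 • !![0,0,-c₀; 1,0,-c₁; 0,1,-c₂]
        + W 2 0 • (!![0,0,-c₀; 1,0,-c₁; 0,1,-c₂] * !![0,0,-c₀; 1,0,-c₁; 0,1,-c₂]) := by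
  have h' : ∀ i j, (!![0,0,-c₀; 1,0,-c₁; 0,1,-c₂] * W) i j
      = (W * !![0,0,-c₀; 1,0,-c₁; 0,1,-c₂]) i j := fun i j => by rw [h]
  have e1 : W 0 1 = -(c₀ * W 2 0) := by
    have := h' 0 0; simpa [Matrix.mul_apply, Fin.sum_univ_three] using this.symm
  have e2 : W 1 1 = W 0 0 - c₁ * W 2 0 := by
    have := h' 1 0; simp [Matrix.mul_apply, Fin.sum_univ_three] at this
    linear_combination -this
  have e3 : W 2 1 = W 1 0 - c₂ * W 2 0 := by
    have := h' 2 0; simp [Matrix.mul_apply, Fin.sum_univ_three] at this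
    linear_combination -this
  have e4 : W 0 2 = -(c₀ * W 2 1) := by
    have := h' 0 1; simpa [Matrix.mul_apply, Fin.sum_univ_three] using this.symm
  have e5 : W 1 2 = W 0 1 - c₁ * W 2 1 := by
    have := h' 1 1; simp [Matrix.mul_apply, Fin.sum_univ_three] at this
    linear_combination -this
  have e6 : W 2 2 = W 1 1 - c₂ * W 2 1 := by
    have := h' 2 1; simp [Matrix.mul_apply, Fin.sum_univ_three] at this
    linear_combination -this
  ext i j
  fin_cases i <;> fin_cases j <;>
    simp [Matrix.mul_apply, Fin.sum_univ_three, Matrix.one_apply, Matrix.vecHead, Matrix.vecTail,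
      e1, e2, e3, e4, e5, e6] <;> ring

lemma my_charpoly_conj_s13 {n : Type*} [Fintype n] [DecidableEq n] (g M : Matrix n n k)
    (hg : IsUnit g.det) : (g * M * g⁻¹).charpoly = M.charpoly := by
  have h1 : g * g⁻¹ = 1 := mul_nonsing_inv g hg
  have hmm : g.map (C : k →+* k[X]) * (g⁻¹).map C = 1 := by
    rw [← Matrix.map_mul, h1]
    exact Matrix.map_one _ (map_zero C) (map_one C)
  have hch : charmatrix (g * M * g⁻¹)
      = g.map (C : k →+* k[X]) * charmatrix M * (g⁻¹).map C := by
    unfold charmatrix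
    simp only [RingHom.mapMatrix_apply, Matrix.map_mul]
    rw [Matrix.mul_sub, Matrix.sub_mul]
    congr 1
    have hsc := (Matrix.scalar_commute (n := n) X (fun r' => by exact Commute.all X r')
      (g.map C)).eq
    rw [← hsc, Matrix.mul_assoc, hmm, Matrix.mul_one]
  rw [Matrix.charpoly, hch, Matrix.det_mul, Matrix.det_mul, Matrix.charpoly]
  have hdd : (g.map (C : k →+* k[X])).det * ((g⁻¹).map (C : k →+* k[X])).det = 1 := by
    rw [← Matrix.det_mul, hmm, Matrix.det_one]
  calc (g.map (C : k →+* k[X])).det * (charmatrix M).det * ((g⁻¹).map C).det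
      = (charmatrix M).det * ((g.map (C : k →+* k[X])).det * ((g⁻¹).map C).det) := by ring
    _ = (charmatrix M).det := by rw [hdd, mul_one]

end aux

/-- Let `S` be a symmetric matrix in `SL(3,k)` with irreducible
characteristic polynomial `p`, and let `E = k[X]/(p)` (realized as a cubic field
extension of `k` with a root `x` of `p`). If some `c ∈ k^×` is not a norm from `E`,
then there exists `A ∈ SL(3,k)` with characteristic polynomial `p` which is not a
product of two symmetric matrices belonging to `SL(3,k)`. -/
theorem stmt13 {k : Type*} [Field k]
    (S : Matrix (Fin 3) (Fin 3) k) (hS_symm : Sᵀ = S) (hS_det : S.det = 1)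
    (hirr : Irreducible S.charpoly)
    (E : Type*) [Field E] [Algebra k E]
    (x : E) (hx : Polynomial.aeval x S.charpoly = 0)
    (hdim : Module.finrank k E = 3)
    (hc : ∃ c : k, c ≠ 0 ∧ ¬ ∃ y : E, y ≠ 0 ∧ Algebra.norm k y = c) :
    ∃ A : Matrix (Fin 3) (Fin 3) k, A.det = 1 ∧ A.charpoly = S.charpoly ∧
      ¬ ∃ S₁ S₂ : Matrix (Fin 3) (Fin 3) k,
        S₁ᵀ = S₁ ∧ S₂ᵀ = S₂ ∧ S₁.det = 1 ∧ S₂.det = 1 ∧ A = S₁ * S₂ := by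
  classical
  obtain ⟨c, hc0, hcn⟩ := hc
  set p := S.charpoly with hp
  have hpm : p.Monic := S.charpoly_monic
  have hdeg : p.natDegree = 3 := by
    rw [hp, Matrix.charpoly_natDegree_eq_dim]; simp
  set c₀ := p.coeff 0 with hc₀def
  set c₁ := p.coeff 1 with hc₁def
  set c₂ := p.coeff 2 with hc₂def
  have hpeq : p = X^3 + C c₂ * X^2 + C c₁ * X + C c₀ := my_cubic_expansion hpm hdeg
  have hc₀ : c₀ = -1 := by
    have h := S.det_eq_sign_charpoly_coeff
    rw [hS_det] at h
    simp only [Fintype.card_fin, ← hc₀def, ← hp] at h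
    have h3 : ((-1 : k)) ^ (3:ℕ) = -1 := by norm_num
    rw [h3] at h
    linear_combination h
  obtain ⟨Cm, hCmdef⟩ : ∃ M : Matrix (Fin 3) (Fin 3) k, M = !![0,0,-c₀; 1,0,-c₁; 0,1,-c₂] :=
    ⟨_, rfl⟩
  have hCch : Cm.charpoly = p := by rw [hCmdef, my_companion_charpoly, hpeq]
  have hCdet : Cm.det = 1 := by rw [hCmdef, my_companion_det, hc₀]; ring
  -- field theory
  have hfin : FiniteDimensional k E := FiniteDimensional.of_finrank_pos (by rw [hdim]; norm_num)
  have hmin : minpoly k x = p := (minpoly.eq_of_irreducible_of_monic hirr hx hpm).symm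
  have hli : LinearIndependent k (fun i : Fin 3 => x ^ (i : ℕ)) := by
    have h := linearIndependent_pow (K := k) x
    rw [hmin, hdeg] at h
    exact h
  let b : Module.Basis (Fin 3) k E := basisOfLinearIndependentOfCardEqFinrank hli (by simp [hdim])
  have hb : ∀ i : Fin 3, b i = x ^ (i : ℕ) := fun i => by
    simp [b, coe_basisOfLinearIndependentOfCardEqFinrank]
  have hx3 : x ^ 3 = (-c₀) • (x ^ (0:ℕ)) + (-c₁) • (x ^ (1:ℕ)) + (-c₂) • (x ^ (2:ℕ)) := by
    have h := hx
    rw [hpeq] at h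
    simp only [map_add, _root_.map_mul, map_pow, aeval_X, aeval_C] at h
    simp only [Algebra.smul_def, _root_.map_neg, pow_zero, pow_one, mul_one]
    linear_combination h
  have hbx : Algebra.leftMulMatrix b x = Cm := by
    rw [hCmdef]
    ext i j
    rw [Algebra.leftMulMatrix_eq_repr_mul]
    fin_cases j
    · show (b.repr (x * b 0)) i = !![0,0,-c₀; 1,0,-c₁; 0,1,-c₂] i 0
      have hxb : x * b 0 = b 1 := by
        rw [hb 0, hb 1]
        show x * x ^ (0:ℕ) = x ^ (1:ℕ)
        ring
      rw [hxb, b.repr_self]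
      fin_cases i <;>
        simp [Finsupp.single_apply, Fin.ext_iff, Matrix.vecHead, Matrix.vecTail]
    · show (b.repr (x * b 1)) i = !![0,0,-c₀; 1,0,-c₁; 0,1,-c₂] i 1
      have hxb : x * b 1 = b 2 := by
        rw [hb 1, hb 2]
        show x * x ^ (1:ℕ) = x ^ (2:ℕ)
        ring
      rw [hxb, b.repr_self]
      fin_cases i <;>
        simp [Finsupp.single_apply, Fin.ext_iff, Matrix.vecHead, Matrix.vecTail]
    · show (b.repr (x * b 2)) i = !![0,0,-c₀; 1,0,-c₁; 0,1,-c₂] i 2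
      have hxb : x * b 2 = (-c₀) • b 0 + (-c₁) • b 1 + (-c₂) • b 2 := by
        rw [hb 0, hb 1, hb 2]
        show x * x ^ (2:ℕ) = (-c₀) • x ^ (0:ℕ) + (-c₁) • x ^ (1:ℕ) + (-c₂) • x ^ (2:ℕ)
        rw [← hx3]
        ring
      rw [hxb]
      simp only [map_add, _root_.map_smul, b.repr_self]
      fin_cases i <;>
        simp [Finsupp.single_apply, Fin.ext_iff, Matrix.vecHead, Matrix.vecTail]
  have hnorm : ∀ q : k[X], Algebra.norm k (aeval x q) = (aeval Cm q).det := by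
    intro q
    rw [Algebra.norm_eq_matrix_det b, ← Polynomial.aeval_algHom_apply, hbx]
  -- the intertwiner
  obtain ⟨T₀, hT₀def⟩ : ∃ M : Matrix (Fin 3) (Fin 3) k, M = !![c₁,c₂,1; c₂,1,0; 1,0,0] :=
    ⟨_, rfl⟩
  have hT₀det : T₀.det = -1 := by rw [hT₀def]; exact my_Tdet c₀ c₁ c₂
  have hT₀unit : IsUnit T₀.det := by rw [hT₀det]; simp
  have hint : Cm * T₀ = T₀ * Cmᵀ := by
    rw [hCmdef, hT₀def, my_companion_transpose]
    exact my_intertwine c₀ c₁ c₂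
  have ht1 : T₀ * T₀⁻¹ = 1 := Matrix.mul_nonsing_inv T₀ hT₀unit
  have ht2 : T₀⁻¹ * T₀ = 1 := Matrix.nonsing_inv_mul T₀ hT₀unit
  have ct2 : ∀ X : Matrix (Fin 3) (Fin 3) k, T₀⁻¹ * (T₀ * X) = X := fun X => by
    rw [← Matrix.mul_assoc, ht2, Matrix.one_mul]
  -- the conjugating matrix
  obtain ⟨g, hgdef⟩ : ∃ M : Matrix (Fin 3) (Fin 3) k, M = Matrix.diagonal ![c^2, 1, 1] :=
    ⟨_, rfl⟩
  have hgdet : g.det = c^2 := by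
    rw [hgdef, Matrix.det_diagonal]
    simp [Fin.prod_univ_three]
  have hgunit : IsUnit g.det := by
    rw [hgdet]; exact (isUnit_iff_ne_zero).mpr (pow_ne_zero _ hc0)
  have hgT : gᵀ = g := by rw [hgdef]; exact Matrix.diagonal_transpose _
  have hg1 : g * g⁻¹ = 1 := Matrix.mul_nonsing_inv g hgunit
  have hg2 : g⁻¹ * g = 1 := Matrix.nonsing_inv_mul g hgunit
  have hgiT : g⁻¹ᵀ = g⁻¹ := by rw [Matrix.transpose_nonsing_inv, hgT]
  have cg1 : ∀ X : Matrix (Fin 3) (Fin 3) k, g * (g⁻¹ * X) = X := fun X => by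
    rw [← Matrix.mul_assoc, hg1, Matrix.one_mul]
  have cg2 : ∀ X : Matrix (Fin 3) (Fin 3) k, g⁻¹ * (g * X) = X := fun X => by
    rw [← Matrix.mul_assoc, hg2, Matrix.one_mul]
  refine ⟨g * Cm * g⁻¹, ?_, ?_, ?_⟩
  · rw [Matrix.det_mul, Matrix.det_mul, hCdet, Matrix.det_nonsing_inv, mul_one,
      Ring.inverse_eq_inv, hgdet]
    field_simp
  · rw [my_charpoly_conj_s13 _ _ hgunit, hCch]
  · rintro ⟨S₁, S₂, h1s, h2s, hd1, hd2, hA⟩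
    have hAT : (g * Cm * g⁻¹) * S₁ = S₁ * (g * Cm * g⁻¹)ᵀ := by
      rw [hA, Matrix.transpose_mul, h1s, h2s, Matrix.mul_assoc]
    obtain ⟨V, hVdef⟩ : ∃ M : Matrix (Fin 3) (Fin 3) k, M = g⁻¹ * S₁ * g⁻¹ := ⟨_, rfl⟩
    have hS₁V : S₁ = g * V * g := by
      rw [hVdef]
      have h := cg1 (S₁ * (g⁻¹ * g))
      rw [hg2, Matrix.mul_one] at h
      calc S₁ = g * (g⁻¹ * (S₁ * (g⁻¹ * g))) := by rw [hg2, Matrix.mul_one, cg1]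
        _ = g * (g⁻¹ * S₁ * g⁻¹) * g := by simp only [Matrix.mul_assoc]
    have hCV : Cm * V = V * Cmᵀ := by
      have h2 := congrArg (fun M => g⁻¹ * M * g⁻¹) hAT
      simp only [Matrix.transpose_mul, hgT, hgiT, Matrix.mul_assoc, cg1, cg2, hg1, hg2,
        Matrix.mul_one, Matrix.one_mul] at h2
      rw [hVdef]
      simp only [Matrix.mul_assoc]
      exact h2
    obtain ⟨W, hWdef⟩ : ∃ M : Matrix (Fin 3) (Fin 3) k, M = V * T₀⁻¹ := ⟨_, rfl⟩
    have hVW : V = W * T₀ := by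
      rw [hWdef, Matrix.mul_assoc, ht2, Matrix.mul_one]
    have hTC : Cmᵀ * T₀⁻¹ = T₀⁻¹ * Cm := by
      have h2 := congrArg (fun M => T₀⁻¹ * M * T₀⁻¹) hint
      simp only [Matrix.mul_assoc, ct2, ht1, ht2, Matrix.mul_one, Matrix.one_mul] at h2
      exact h2.symm
    have hWC : Cm * W = W * Cm := by
      rw [hWdef]
      calc Cm * (V * T₀⁻¹) = (Cm * V) * T₀⁻¹ := by rw [Matrix.mul_assoc]
        _ = (V * Cmᵀ) * T₀⁻¹ := by rw [hCV]
        _ = V * (Cmᵀ * T₀⁻¹) := by rw [Matrix.mul_assoc]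
        _ = V * (T₀⁻¹ * Cm) := by rw [hTC]
        _ = V * T₀⁻¹ * Cm := by rw [Matrix.mul_assoc]
    have hWC' : !![0,0,-c₀; 1,0,-c₁; 0,1,-c₂] * W = W * !![0,0,-c₀; 1,0,-c₁; 0,1,-c₂] := by
      rw [← hCmdef]; exact hWC
    have hWcomm := my_commutant c₀ c₁ c₂ W hWC'
    rw [← hCmdef] at hWcomm
    set q : k[X] := C (W 0 0) + C (W 1 0) * X + C (W 2 0) * X^2 with hqdef
    have hWq : W = aeval Cm q := by
      rw [hWcomm, hqdef]
      simp only [map_add, _root_.map_mul, map_pow, aeval_X, aeval_C,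
        Algebra.algebraMap_eq_smul_one, smul_mul_assoc, Matrix.one_mul, one_mul, pow_two]
    have hWdet : W.det = Algebra.norm k (aeval x q) := by rw [hnorm q, ← hWq]
    set y := aeval x q with hydef
    have hkey : (1 : k) = c^4 * (Algebra.norm k y * (-1)) := by
      calc (1 : k) = S₁.det := hd1.symm
        _ = g.det * V.det * g.det := by rw [hS₁V, Matrix.det_mul, Matrix.det_mul]
        _ = g.det * (W.det * T₀.det) * g.det := by rw [hVW, Matrix.det_mul]
        _ = c^4 * (Algebra.norm k y * (-1)) := by
            rw [hgdet, hT₀det, hWdet]; ring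
    have hc4 : (c : k)^4 ≠ 0 := pow_ne_zero _ hc0
    have hNy : Algebra.norm k y = -(c^4)⁻¹ := by
      field_simp
      linear_combination hkey
    have hy0 : y ≠ 0 := by
      intro h0
      rw [h0] at hNy
      have hz : Algebra.norm k (0 : E) = 0 :=
        (Algebra.norm_eq_zero_iff (R := k) (S := E)).mpr rfl
      rw [hz] at hNy
      exact (inv_ne_zero hc4) (by linear_combination hNy)
    have hNyinv : Algebra.norm k y⁻¹ = (Algebra.norm k y)⁻¹ := by
      have hmul : Algebra.norm k y * Algebra.norm k y⁻¹ = 1 := by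
        rw [← _root_.map_mul, mul_inv_cancel₀ hy0, _root_.map_one]
      have hN0 : Algebra.norm k y ≠ 0 := by
        rw [hNy]
        simp [hc4]
      calc Algebra.norm k y⁻¹
          = (Algebra.norm k y)⁻¹ * (Algebra.norm k y * Algebra.norm k y⁻¹) := by
            rw [← mul_assoc, inv_mul_cancel₀ hN0, one_mul]
        _ = (Algebra.norm k y)⁻¹ := by rw [hmul, mul_one]
    refine hcn ⟨y⁻¹ * algebraMap k E (-c⁻¹), ?_, ?_⟩
    · refine mul_ne_zero (inv_ne_zero hy0) ?_
      simp [hc0]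
    · rw [_root_.map_mul, Algebra.norm_algebraMap, hdim, hNyinv, hNy]
      field_simp
end
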